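/- arXiv:2512.00372 — 3 statements merged into one kernel-verified Lean document; each statement's English description precedes it below -/
import Mathlib

section
/- Every element of K_n is a simplex, i.e., the convex hull of a finite affinely independent set of points in ℝ^n. -/
open Set Function

noncomputable section

abbrev E (n : ℕ) := EuclideanSpace ℝ (Fin n)

/-- `I^d × {0}^{n-d}` inside `ℝ^n`. -/
def IcubeD (n d : ℕ) : Set (E n) :=
  {x | (∀ i : Fin n, (i : ℕ) < d → x i ∈ Icc (-1 : ℝ) 1) ∧
       ∀ i : Fin n, d ≤ (i : ℕ) → x i = 0}

/-- The cube `I^n = [-1,1]^n`. -/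
def Icube (n : ℕ) : Set (E n) := IcubeD n n

/-- `H^d_{ij}(a,b) = {x ∈ I^d × {0}^{n-d} : a·x_i ≥ b·x_j}`. -/
def HsetD (n d : ℕ) (i j : Fin n) (a b : ℝ) : Set (E n) :=
  {x ∈ IcubeD n d | b * x j ≤ a * x i}

def Hset (n : ℕ) (i j : Fin n) (a b : ℝ) : Set (E n) := HsetD n n i j a b

/-- The family `ℋ^d` of the sets `H^d_{ij}(a,b)`, `a, b ∈ {-1,1}`. -/
def HfamD (n d : ℕ) : Set (Set (E n)) :=
  {H | ∃ i j : Fin n, (i : ℕ) < d ∧ (j : ℕ) < d ∧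
      ∃ a b : ℝ, (a = 1 ∨ a = -1) ∧ (b = 1 ∨ b = -1) ∧ H = HsetD n d i j a b}

def Hfam (n : ℕ) : Set (Set (E n)) := HfamD n n

/-- Fundamental subsets of `ℋ^d`. -/
def IsFundSubsetD (n d : ℕ) (S : Set (Set (E n))) : Prop :=
  S ⊆ HfamD n d ∧
  ∀ i j : Fin n, (i : ℕ) < d → (j : ℕ) < d → i ≤ j →
    (HsetD n d i j 1 (-1) ∈ S ∨ HsetD n d i j (-1) 1 ∈ S) ∧
    (HsetD n d i j 1 1 ∈ S ∨ HsetD n d i j (-1) (-1) ∈ S)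

def IsFundSubset (n : ℕ) (S : Set (Set (E n))) : Prop := IsFundSubsetD n n S

/-- `K°_d` (realized inside `ℝ^n` on the slice `I^d × {0}^{n-d}`). -/
def KoD (n d : ℕ) : Set (Set (E n)) :=
  {K | ∃ S, IsFundSubsetD n d S ∧ K = ⋂₀ S}

/-- `K°_n`. -/
def Ko (n : ℕ) : Set (Set (E n)) := KoD n n

/-- Symmetries of the cube `I^n`. -/
def SymI (n : ℕ) (γ : E n → E n) : Prop :=
  Isometry γ ∧ Surjective γ ∧ γ '' Icube n = Icube n

/-- Conformal affine maps `x ↦ λ U x + v`, `λ > 0`, `U ∈ O(n)`. -/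
def ConfAffine (n : ℕ) (L : E n → E n) : Prop :=
  ∃ (c : ℝ) (U : E n ≃ₗᵢ[ℝ] E n) (v : E n), 0 < c ∧ ∀ x, L x = c • U x + v

/-- `d`-dimensional cubes in `ℝ^n` (for `d ≥ 1`). -/
def IsCube (n d : ℕ) (C : Set (E n)) : Prop :=
  ∃ L : E n → E n, ConfAffine n L ∧ L '' C = IcubeD n d

/-- `K°_d(C)` for a `d`-dimensional cube `C` (with `K°_0(C) = {C}`). -/
def KoCube (n d : ℕ) (C : Set (E n)) : Set (Set (E n)) :=
  {K | (d = 0 ∧ K = C) ∨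
       (1 ≤ d ∧ ∃ L : E n → E n, ConfAffine n L ∧ L '' C = IcubeD n d ∧
          ∃ H ∈ KoD n d, K = L ⁻¹' H)}

/-- Faces of `I^d × {0}^{n-d}` of dimension `e`. -/
def IsFaceD (n d : ℕ) (f : Set (E n)) (e : ℕ) : Prop :=
  ∃ J : Fin n → Set ℝ,
    (∀ i : Fin n, (i : ℕ) < d → (J i = Icc (-1 : ℝ) 1 ∨ J i = {-1} ∨ J i = {1})) ∧
    (∀ i : Fin n, d ≤ (i : ℕ) → J i = {0}) ∧
    {i : Fin n | J i = Icc (-1 : ℝ) 1}.ncard = e ∧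
    f = {x : E n | ∀ i, x i ∈ J i}

/-- `c` is a face of dimension `e` of the `d`-dimensional cube `C`. -/
def FaceOfCubeDim (n d : ℕ) (C c : Set (E n)) (e : ℕ) : Prop :=
  ∃ L : E n → E n, ConfAffine n L ∧ L '' C = IcubeD n d ∧
    ∃ f, IsFaceD n d f e ∧ c = L ⁻¹' f

/-- The symmetric decomposition `K_d(C)` of a `d`-dimensional cube `C`. -/
def KcalCube (n d : ℕ) (C : Set (E n)) : Set (Set (E n)) :=
  {K | ∃ c e, FaceOfCubeDim n d C c e ∧ K ∈ KoCube n e c}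

/-- `∂K_d(C)`: union of the `K°` of the proper faces of `C`. -/
def KcalBdCube (n d : ℕ) (C : Set (E n)) : Set (Set (E n)) :=
  {K | ∃ c e, FaceOfCubeDim n d C c e ∧ e < d ∧ K ∈ KoCube n e c}

/-- The symmetric decomposition `K_n` of `I^n`. -/
def Kcal (n : ℕ) : Set (Set (E n)) :=
  {K | ∃ c e, IsFaceD n n c e ∧ K ∈ KoCube n e c}

/-- `∂K_n`: union of the `K°` of the proper faces of `I^n`. -/
def KcalBdI (n : ℕ) : Set (Set (E n)) :=
  {K | ∃ c e, IsFaceD n n c e ∧ e < n ∧ K ∈ KoCube n e c}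

/-- `∂_∘ C`: the union of the proper faces of the `d`-cube `C`. -/
def cellBd (n d : ℕ) (C : Set (E n)) : Set (E n) :=
  ⋃₀ {c | ∃ e, e < d ∧ FaceOfCubeDim n d C c e}

/-- The cone `Cone(x, Y) = {x + t (y - x) : y ∈ Y, t ∈ [0,1]}`. -/
def Cone (n : ℕ) (x : E n) (Y : Set (E n)) : Set (E n) :=
  {z | ∃ y ∈ Y, ∃ t : ℝ, t ∈ Icc (0 : ℝ) 1 ∧ z = x + t • (y - x)}

/-- Standard orthotopes `∏ [-a_i, a_i]`. -/
def StdOrtho (n : ℕ) (a : Fin n → ℝ) : Set (E n) :=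
  {x | ∀ i, x i ∈ Icc (-(a i)) (a i)}

/-- `n`-dimensional orthotopes in `ℝ^n`. -/
def IsOrtho (n : ℕ) (R : Set (E n)) : Prop :=
  ∃ (L : E n → E n) (a : Fin n → ℝ), Isometry L ∧ Surjective L ∧
    (∀ i, 0 < a i) ∧ L '' R = StdOrtho n a

/-- The cubic-stretching of the standard orthotope `∏ [-a_i, a_i]`. -/
def stretch (n : ℕ) (a : Fin n → ℝ) : E n → E n :=
  fun x => WithLp.toLp 2 (fun i => x i / a i)

/-- `K_n(R)` for an `n`-dimensional orthotope `R`. -/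
def KcalOrtho (n : ℕ) (R : Set (E n)) : Set (Set (E n)) :=
  {K | ∃ (L : E n → E n) (a : Fin n → ℝ), Isometry L ∧ Surjective L ∧
      (∀ i, 0 < a i) ∧ L '' R = StdOrtho n a ∧
      ∃ H ∈ Kcal n, K = L ⁻¹' (stretch n a ⁻¹' H)}

/-- Faces of an `n`-dimensional orthotope `R`. -/
def FaceOfOrtho (n : ℕ) (R c : Set (E n)) : Prop :=
  ∃ (L : E n → E n) (a : Fin n → ℝ), Isometry L ∧ Surjective L ∧
    (∀ i, 0 < a i) ∧ L '' R = StdOrtho n a ∧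
    ∃ f e, IsFaceD n n f e ∧ c = L ⁻¹' (stretch n a ⁻¹' f)

/-- The center `x_α` of the subcube `C_α`. -/
def xalpha (n l : ℕ) (α : Fin n → ℕ) : E n :=
  WithLp.toLp 2 (fun i => (2 * (α i : ℝ) + 1 - (l : ℝ)) / (l : ℝ))

/-- `T_α(x) = l (x - x_α)`, mapping `C_α` onto `I^n`. -/
def Talpha (n l : ℕ) (α : Fin n → ℕ) : E n → E n :=
  fun x => (l : ℝ) • (x - xalpha n l α)

/-- The refined symmetric decomposition `K_{n,l}`. -/
def Knl (n l : ℕ) : Set (Set (E n)) :=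
  {K | ∃ α : Fin n → ℕ, (∀ i, α i < l) ∧ ∃ H ∈ Kcal n, K = Talpha n l α ⁻¹' H}

/-- `Γ` is a group of surjective isometries of `ℝ^n`. -/
def IsIsomGroup (n : ℕ) (Γ : Set (E n → E n)) : Prop :=
  (∀ γ ∈ Γ, Isometry γ ∧ Surjective γ) ∧ id ∈ Γ ∧
  (∀ γ ∈ Γ, ∀ γ' ∈ Γ, γ ∘ γ' ∈ Γ) ∧
  ∀ γ ∈ Γ, ∃ γ' ∈ Γ, γ ∘ γ' = id ∧ γ' ∘ γ = id

/-- `D` is a fundamental domain of `Γ`. -/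
def IsFundDom (n : ℕ) (Γ : Set (E n → E n)) (D : Set (E n)) : Prop :=
  (∃ U : Set (E n), U.Nonempty ∧ IsOpen U ∧ IsConnected U ∧ D = closure U) ∧
  (⋃ γ ∈ Γ, γ '' D) = univ ∧
  (∀ x : E n, ∃ V : Set (E n), x ∈ V ∧ IsOpen V ∧
    {γ ∈ Γ | ((γ '' D) ∩ V).Nonempty}.Finite) ∧
  ∀ γ ∈ Γ, γ ≠ id → interior D ∩ interior (γ '' D) = ∅

namespace Stmt10Aux
variable {n : ℕ}

/-- signed-support order -/
def Sub (p q : E n) : Prop := ∀ i, p i ≠ 0 → q i = p i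

def suppc (p : E n) : ℕ := (Finset.univ.filter (fun i => p i ≠ 0)).card

lemma Sub.suppc_le {p q : E n} (h : Sub p q) : suppc p ≤ suppc q := by
  apply Finset.card_le_card
  intro i hi
  simp only [Finset.mem_filter, Finset.mem_univ, true_and] at *
  rw [h i hi]; exact hi

lemma Sub.eq_of_suppc_le {p q : E n} (h : Sub p q) (hc : suppc q ≤ suppc p) : p = q := by
  have hsub : (Finset.univ.filter (fun i => p i ≠ 0)) ⊆ (Finset.univ.filter (fun i => q i ≠ 0)) := by
    intro i hi
    simp only [Finset.mem_filter, Finset.mem_univ, true_and] at *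
    rw [h i hi]; exact hi
  have heq := Finset.eq_of_subset_of_card_le hsub hc
  ext i
  by_cases hp : p i ≠ 0
  · exact (h i hp).symm
  · push_neg at hp
    by_cases hq : q i ≠ 0
    · exfalso
      have : i ∈ Finset.univ.filter (fun i => q i ≠ 0) := by simp [hq]
      rw [← heq] at this
      simp only [Finset.mem_filter, Finset.mem_univ, true_and] at this
      exact this hp
    · push_neg at hq; rw [hp, hq]

lemma Sub.gap {p q : E n} (h : Sub q p) (hne : q ≠ p) : ∃ i, p i ≠ 0 ∧ q i = 0 := by
  by_contra hcon
  push_neg at hcon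
  apply hne
  ext i
  by_cases hq : q i ≠ 0
  · exact (h i hq).symm
  · push_neg at hq
    by_cases hp : p i ≠ 0
    · exact absurd hq (hcon i hp)
    · push_neg at hp; rw [hq, hp]

lemma chain_affineIndependent (s : Finset (E n))
    (hch : ∀ p ∈ s, ∀ q ∈ s, Sub p q ∨ Sub q p) :
    AffineIndependent ℝ ((↑) : {x : E n // x ∈ s} → E n) := by
  classical
  rw [affineIndependent_iff]
  intro t w hw0 hws
  by_contra hne
  push_neg at hne
  obtain ⟨z0, hz0t, hz0⟩ := hne
  set N : Finset {x : E n // x ∈ s} := t.filter (fun z => w z ≠ 0) with hN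
  have hNmem : ∀ z, z ∈ N ↔ z ∈ t ∧ w z ≠ 0 := by intro z; simp [hN]
  have hNne : N.Nonempty := ⟨z0, (hNmem z0).2 ⟨hz0t, hz0⟩⟩
  obtain ⟨x, hxN, hxmax⟩ := N.exists_max_image (fun z => suppc (z : E n)) hNne
  have hSubx : ∀ y ∈ N, Sub (y : E n) (x : E n) := by
    intro y hy
    rcases eq_or_ne y x with rfl | hyx
    · intro i hi; rfl
    · rcases hch _ y.2 _ x.2 with h | h
      · exact h
      · have := h.eq_of_suppc_le (hxmax y hy)
        exact absurd (Subtype.ext this) (Ne.symm hyx)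
  by_cases hsingle : N.erase x = ∅
  · have honly : ∀ b ∈ t, b ≠ x → w b = 0 := by
      intro b hbt hbx
      by_contra hb
      have hbN : b ∈ N.erase x := Finset.mem_erase.2 ⟨hbx, (hNmem b).2 ⟨hbt, hb⟩⟩
      rw [hsingle] at hbN
      exact absurd hbN (Finset.notMem_empty b)
    have hsum : ∑ z ∈ t, w z = w x := by
      apply Finset.sum_eq_single x honly
      · intro h; exact absurd ((hNmem x).1 hxN).1 h
    rw [hw0] at hsum
    exact ((hNmem x).1 hxN).2 hsum.symm
  · obtain ⟨y0, hy0⟩ := Finset.nonempty_of_ne_empty hsingle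
    obtain ⟨ys, hysN, hysmax⟩ := (N.erase x).exists_max_image (fun z => suppc (z : E n)) ⟨y0, hy0⟩
    have hSubys : ∀ y ∈ N.erase x, Sub (y : E n) (ys : E n) := by
      intro y hy
      rcases eq_or_ne y ys with rfl | hyys
      · intro i hi; rfl
      · rcases hch _ y.2 _ ys.2 with h | h
        · exact h
        · have := h.eq_of_suppc_le (hysmax y hy)
          exact absurd (Subtype.ext this) (Ne.symm hyys)
    have hysne : ys ≠ x := (Finset.mem_erase.1 hysN).1
    obtain ⟨i, hxi, hysi⟩ := Sub.gap (hSubx ys (Finset.mem_erase.1 hysN).2)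
      (fun hc => hysne (Subtype.ext hc))
    let ev : E n →ₗ[ℝ] ℝ :=
      { toFun := fun v => v i, map_add' := fun _ _ => rfl, map_smul' := fun _ _ => rfl }
    have hco : ∑ z ∈ t, w z * (z : E n) i = 0 := by
      have h1 := congrArg ev hws
      rw [map_sum, map_zero] at h1
      simp only [map_smul, smul_eq_mul] at h1
      exact h1
    have hsum : ∑ z ∈ t, w z * (z : E n) i = w x * (x : E n) i := by
      apply Finset.sum_eq_single x
      · intro b hbt hbx
        by_cases hb : w b = 0
        · rw [hb, zero_mul]
        · have hbN : b ∈ N.erase x := Finset.mem_erase.2 ⟨hbx, (hNmem b).2 ⟨hbt, hb⟩⟩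
          have hbz : (b : E n) i = 0 := by
            by_contra hbi
            rw [hSubys b hbN i hbi] at hysi
            exact hbi hysi
          rw [hbz, mul_zero]
      · intro h; exact absurd ((hNmem x).1 hxN).1 h
    rw [hsum] at hco
    rcases mul_eq_zero.1 hco with h | h
    · exact ((hNmem x).1 hxN).2 h
    · exact hxi h

end Stmt10Aux

namespace Stmt10Aux
variable {n : ℕ}

lemma convex_HsetD (d : ℕ) (i j : Fin n) (a b : ℝ) : Convex ℝ (HsetD n d i j a b) := by
  intro x hx y hy s t hs ht hst
  obtain ⟨⟨hx1, hx2⟩, hx3⟩ := hx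
  obtain ⟨⟨hy1, hy2⟩, hy3⟩ := hy
  have happ : ∀ k : Fin n, (s • x + t • y) k = s * x k + t * y k := fun k => rfl
  refine ⟨⟨fun k hk => ?_, fun k hk => ?_⟩, ?_⟩
  · obtain ⟨h1, h2⟩ := hx1 k hk
    obtain ⟨h3, h4⟩ := hy1 k hk
    rw [happ]
    constructor <;> nlinarith
  · rw [happ, hx2 k hk, hy2 k hk]; ring
  · show b * (s • x + t • y) j ≤ a * (s • x + t • y) i
    rw [happ, happ]
    nlinarith [mul_le_mul_of_nonneg_left hx3 hs, mul_le_mul_of_nonneg_left hy3 ht]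

lemma convex_sInterS {d : ℕ} {S : Set (Set (E n))} (hS : IsFundSubsetD n d S) :
    Convex ℝ (⋂₀ S) := by
  apply convex_sInter
  intro M hM
  obtain ⟨i, j, _, _, a, b, _, _, rfl⟩ := hS.1 hM
  exact convex_HsetD d i j a b

lemma cmp_le {d : ℕ} {S : Set (Set (E n))} (hS : IsFundSubsetD n d S)
    {i j : Fin n} (hi : (i : ℕ) < d) (hj : (j : ℕ) < d) (hij : i ≤ j) {a b : ℝ}
    (ha : a = 1 ∨ a = -1) (hb : b = 1 ∨ b = -1) :
    (∀ x ∈ ⋂₀ S, b * x j ≤ a * x i) ∨ (∀ x ∈ ⋂₀ S, a * x i ≤ b * x j) := by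
  obtain ⟨h1, h2⟩ := hS.2 i j hi hj hij
  rcases ha with rfl | rfl <;> rcases hb with rfl | rfl
  · rcases h2 with hm | hm
    · exact Or.inl fun x hx => by have := (hx _ hm).2; linarith
    · exact Or.inr fun x hx => by have := (hx _ hm).2; linarith
  · rcases h1 with hm | hm
    · exact Or.inl fun x hx => by have := (hx _ hm).2; linarith
    · exact Or.inr fun x hx => by have := (hx _ hm).2; linarith
  · rcases h1 with hm | hm
    · exact Or.inr fun x hx => by have := (hx _ hm).2; linarith
    · exact Or.inl fun x hx => by have := (hx _ hm).2; linarith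
  · rcases h2 with hm | hm
    · exact Or.inr fun x hx => by have := (hx _ hm).2; linarith
    · exact Or.inl fun x hx => by have := (hx _ hm).2; linarith

lemma cmp {d : ℕ} {S : Set (Set (E n))} (hS : IsFundSubsetD n d S)
    {i j : Fin n} (hi : (i : ℕ) < d) (hj : (j : ℕ) < d) {a b : ℝ}
    (ha : a = 1 ∨ a = -1) (hb : b = 1 ∨ b = -1) :
    (∀ x ∈ ⋂₀ S, b * x j ≤ a * x i) ∨ (∀ x ∈ ⋂₀ S, a * x i ≤ b * x j) := by
  rcases le_total i j with h | h
  · exact cmp_le hS hi hj h ha hb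
  · exact (cmp_le hS hj hi h hb ha).symm

lemma map_mem {d : ℕ} {S : Set (Set (E n))} (hS : IsFundSubsetD n d S) {x : E n}
    (hx : x ∈ ⋂₀ S) (f : ℝ → ℝ) (hmono : Monotone f) (hodd : ∀ s, f (-s) = -f s)
    (hbd : ∀ s, |s| ≤ 1 → |f s| ≤ 1) :
    WithLp.toLp 2 (fun i => f (x i)) ∈ ⋂₀ S := by
  have hf0 : f 0 = 0 := by have := hodd 0; simp at this; linarith
  intro M hM
  obtain ⟨i, j, hi, hj, a, b, ha, hb, rfl⟩ := hS.1 hM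
  have hxM := hx _ hM
  obtain ⟨⟨hc1, hc2⟩, hineq⟩ := hxM
  refine ⟨⟨fun k hk => ?_, fun k hk => ?_⟩, ?_⟩
  · have h1 := hc1 k hk
    have h2 : |x k| ≤ 1 := abs_le.2 ⟨h1.1, h1.2⟩
    exact Set.mem_Icc.2 (abs_le.1 (hbd _ h2))
  · show f (x k) = 0
    rw [hc2 k hk, hf0]
  · show b * f (x j) ≤ a * f (x i)
    have key : ∀ c : ℝ, c = 1 ∨ c = -1 → ∀ u : ℝ, c * f u = f (c * u) := by
      rintro c (rfl | rfl) u
      · simp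
      · simp only [neg_one_mul, hodd]
    rw [key a ha, key b hb]
    exact hmono hineq

end Stmt10Aux

namespace Stmt10Aux
variable {n : ℕ}

lemma sign_mono : Monotone Real.sign := by
  intro a b hab
  rcases lt_trichotomy a 0 with ha | ha | ha <;> rcases lt_trichotomy b 0 with hb | hb | hb <;>
    simp_all [Real.sign_of_pos, Real.sign_of_neg, Real.sign_zero] <;> norm_num <;> linarith

lemma sign_odd : ∀ s : ℝ, Real.sign (-s) = -Real.sign s := by
  intro s
  rcases lt_trichotomy s 0 with h | h | h
  · rw [Real.sign_of_neg h, Real.sign_of_pos (by linarith : (0:ℝ) < -s)]; norm_num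
  · rw [h]; simp [Real.sign_zero]
  · rw [Real.sign_of_pos h, Real.sign_of_neg (by linarith : -s < 0)]

lemma sign_bd : ∀ s : ℝ, |s| ≤ 1 → |Real.sign s| ≤ 1 := by
  intro s _
  rcases lt_trichotomy s 0 with h | h | h
  · rw [Real.sign_of_neg h]; norm_num
  · rw [h, Real.sign_zero]; norm_num
  · rw [Real.sign_of_pos h]; norm_num

/-- rescaling function used in the induction -/
def resc (t s : ℝ) : ℝ := (max (s - t) 0 - max (-s - t) 0) / (1 - t)

lemma resc_mono {t : ℝ} (ht : t < 1) : Monotone (resc t) := by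
  intro a b hab
  unfold resc
  have h1 : max (a - t) 0 ≤ max (b - t) 0 := max_le_max (by linarith) le_rfl
  have h2 : max (-b - t) 0 ≤ max (-a - t) 0 := max_le_max (by linarith) le_rfl
  have h3 : (0:ℝ) < 1 - t := by linarith
  have h4 : max (a - t) 0 - max (-a - t) 0 ≤ max (b - t) 0 - max (-b - t) 0 := by linarith
  exact div_le_div_of_nonneg_right h4 h3.le

lemma resc_odd (t : ℝ) : ∀ s : ℝ, resc t (-s) = -resc t s := by
  intro s
  unfold resc
  rw [show -s - t = -s - t from rfl, neg_neg, ← neg_div, neg_sub]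

lemma resc_bd {t : ℝ} (ht0 : 0 < t) (ht1 : t < 1) : ∀ s : ℝ, |s| ≤ 1 → |resc t s| ≤ 1 := by
  intro s hs
  rw [abs_le] at hs
  unfold resc
  rw [abs_div, abs_of_pos (by linarith : (0:ℝ) < 1 - t), div_le_one (by linarith)]
  have h1 : max (s - t) 0 ≤ 1 - t := max_le (by linarith) (by linarith)
  have h2 : max (-s - t) 0 ≤ 1 - t := max_le (by linarith) (by linarith)
  have h3 : (0:ℝ) ≤ max (s - t) 0 := le_max_right _ _
  have h4 : (0:ℝ) ≤ max (-s - t) 0 := le_max_right _ _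
  rw [abs_le]
  constructor <;> linarith

lemma resc_zero (t : ℝ) : resc t 0 = 0 := by
  have := resc_odd t 0
  simp at this
  linarith

lemma resc_of_ge {t s : ℝ} (ht : 0 ≤ t) (h : t ≤ s) : resc t s = (s - t) / (1 - t) := by
  unfold resc
  rw [max_eq_left (by linarith), max_eq_right (by linarith), sub_zero]

lemma resc_of_le {t s : ℝ} (ht : 0 ≤ t) (h : s ≤ -t) : resc t s = (s + t) / (1 - t) := by
  have h1 : resc t (-(-s)) = -resc t (-s) := resc_odd t (-s)
  rw [neg_neg] at h1
  rw [h1, resc_of_ge ht (by linarith), ← neg_div]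
  ring_nf

lemma core (hn : 1 ≤ n) {d : ℕ} (hd : 1 ≤ d) {S : Set (Set (E n))}
    (hS : IsFundSubsetD n d S) :
    ∃ P : Set (E n), P.Finite ∧ (∀ p ∈ P, ∀ q ∈ P, Sub p q ∨ Sub q p) ∧
      ⋂₀ S = convexHull ℝ P := by
  classical
  set P : Set (E n) := {p | p ∈ ⋂₀ S ∧ ∀ i, p i = 0 ∨ p i = 1 ∨ p i = -1} with hPdef
  have hPK : ∀ p ∈ P, p ∈ ⋂₀ S := fun p hp => hp.1
  -- cube membership
  have hi0 : ((⟨0, hn⟩ : Fin n) : ℕ) < d := hd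
  have hcube : ∀ x ∈ ⋂₀ S, x ∈ IcubeD n d := by
    obtain ⟨h1, _⟩ := hS.2 ⟨0, hn⟩ ⟨0, hn⟩ hi0 hi0 le_rfl
    rcases h1 with hm | hm <;> exact fun x hx => (hx _ hm).1
  -- finiteness of P
  have hPfin : P.Finite := by
    have hsub : P ⊆ WithLp.ofLp ⁻¹' Set.pi Set.univ (fun _ : Fin n => ({0, 1, -1} : Set ℝ)) := by
      intro p hp i _
      rcases hp.2 i with h | h | h <;> simp [h]
    exact (Set.Finite.preimage (WithLp.ofLp_injective 2).injOn (Set.Finite.pi fun _ =>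
      (Set.finite_singleton _).insert _ |>.insert _)).subset hsub
  -- chain property
  have hchain : ∀ p ∈ P, ∀ q ∈ P, Sub p q ∨ Sub q p := by
    intro p hp q hq
    by_contra hcon
    push_neg at hcon
    obtain ⟨h1, h2⟩ := hcon
    rw [Sub] at h1 h2
    push_neg at h1 h2
    obtain ⟨i, hpi, hqi⟩ := h1
    obtain ⟨j, hqj, hpj⟩ := h2
    have hi : (i : ℕ) < d := by
      by_contra hni; push_neg at hni; exact hpi ((hcube p hp.1).2 i hni)
    have hj : (j : ℕ) < d := by
      by_contra hnj; push_neg at hnj; exact hqj ((hcube q hq.1).2 j hnj)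
    have hpa : p i = 1 ∨ p i = -1 := by
      rcases hp.2 i with h | h | h
      exacts [absurd h hpi, Or.inl h, Or.inr h]
    have hqb : q j = 1 ∨ q j = -1 := by
      rcases hq.2 j with h | h | h
      exacts [absurd h hqj, Or.inl h, Or.inr h]
    rcases cmp hS hi hj hpa hqb with hc | hc
    · have hq' := hc q hq.1
      have hl : q j * q j = 1 := by rcases hqb with h | h <;> rw [h] <;> norm_num
      have hr : p i * q i ≤ 0 := by
        rcases hq.2 i with h | h | h
        · rw [h]; simp
        · rcases hpa with h' | h'
          · exact absurd (h.trans h'.symm) hqi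
          · rw [h, h']; norm_num
        · rcases hpa with h' | h'
          · rw [h, h']; norm_num
          · exact absurd (h.trans h'.symm) hqi
      linarith
    · have hp' := hc p hp.1
      have hl : p i * p i = 1 := by rcases hpa with h | h <;> rw [h] <;> norm_num
      have hr : q j * p j ≤ 0 := by
        rcases hp.2 j with h | h | h
        · rw [h]; simp
        · rcases hqb with h' | h'
          · exact absurd (h.trans h'.symm) hpj
          · rw [h, h']; norm_num
        · rcases hqb with h' | h'
          · rw [h, h']; norm_num
          · exact absurd (h.trans h'.symm) hpj
      linarith
  -- Vx : distinct positive absolute values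
  set Vx : E n → Finset ℝ :=
    fun x => (Finset.univ.filter (fun i => x i ≠ 0)).image (fun i => |x i|) with hVx
  have main : ∀ m : ℕ, ∀ x : E n, x ∈ ⋂₀ S → (Vx x).card ≤ m → x ∈ convexHull ℝ P := by
    intro m
    induction m with
    | zero =>
      intro x hx hc
      have hV : Vx x = ∅ := Finset.card_eq_zero.1 (le_antisymm hc (Nat.zero_le _))
      have hx0 : ∀ i, x i = 0 := by
        intro i; by_contra h
        have hm : |x i| ∈ Vx x := Finset.mem_image_of_mem _ (by simp [h])
        rw [hV] at hm
        exact absurd hm (Finset.notMem_empty _)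
      exact subset_convexHull ℝ P ⟨hx, fun i => Or.inl (hx0 i)⟩
    | succ m ih =>
      intro x hx hc
      by_cases hV : Vx x = ∅
      · have hx0 : ∀ i, x i = 0 := by
          intro i; by_contra h
          have hm : |x i| ∈ Vx x := Finset.mem_image_of_mem _ (by simp [h])
          rw [hV] at hm
          exact absurd hm (Finset.notMem_empty _)
        exact subset_convexHull ℝ P ⟨hx, fun i => Or.inl (hx0 i)⟩
      · have hVne : (Vx x).Nonempty := Finset.nonempty_of_ne_empty hV
        set t := (Vx x).min' hVne with htdef
        have htmem : t ∈ Vx x := (Vx x).min'_mem hVne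
        obtain ⟨i1, hi1mem, hti1⟩ := Finset.mem_image.1 htmem
        rw [Finset.mem_filter] at hi1mem
        have hxi1 : x i1 ≠ 0 := hi1mem.2
        have ht0 : 0 < t := by rw [← hti1]; exact abs_pos.2 hxi1
        have hlt : ∀ i : Fin n, x i ≠ 0 → (i : ℕ) < d := by
          intro i hi; by_contra hni; push_neg at hni
          exact hi ((hcube x hx).2 i hni)
        have habs1 : ∀ i, x i ≠ 0 → |x i| ≤ 1 := by
          intro i hi
          have h := (hcube x hx).1 i (hlt i hi)
          exact abs_le.2 ⟨h.1, h.2⟩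
        have htle : ∀ i, x i ≠ 0 → t ≤ |x i| := fun i hi =>
          (Vx x).min'_le _ (Finset.mem_image_of_mem _ (by simp [hi]))
        by_cases hteq : 1 ≤ t
        · refine subset_convexHull ℝ P ⟨hx, fun i => ?_⟩
          by_cases hi : x i = 0
          · exact Or.inl hi
          · have h1 : |x i| = 1 := le_antisymm (habs1 i hi) (le_trans hteq (htle i hi))
            rcases (abs_eq (by norm_num : (0:ℝ) ≤ 1)).1 h1 with h | h
            · exact Or.inr (Or.inl h)
            · exact Or.inr (Or.inr h)
        · push_neg at hteq
          have hne1t : (1:ℝ) - t ≠ 0 := by linarith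
          set q : E n := WithLp.toLp 2 (fun i => Real.sign (x i)) with hqdef
          have hqK : q ∈ ⋂₀ S := map_mem hS hx Real.sign sign_mono sign_odd sign_bd
          have hqP : q ∈ P := by
            refine ⟨hqK, fun i => ?_⟩
            rcases lt_trichotomy (x i) 0 with h | h | h
            · exact Or.inr (Or.inr (Real.sign_of_neg h))
            · exact Or.inl (by rw [hqdef]; simp only [WithLp.ofLp_toLp]; rw [h, Real.sign_zero])
            · exact Or.inr (Or.inl (Real.sign_of_pos h))
          set x' : E n := WithLp.toLp 2 (fun i => resc t (x i)) with hx'def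
          have hx'K : x' ∈ ⋂₀ S :=
            map_mem hS hx (resc t) (resc_mono hteq) (resc_odd t) (resc_bd ht0 hteq)
          have hsubV : Vx x' ⊆ ((Vx x).erase t).image (fun v => (v - t) / (1 - t)) := by
            intro v hv
            obtain ⟨i, hi, hvi⟩ := Finset.mem_image.1 hv
            rw [Finset.mem_filter] at hi
            have hx'i : x' i ≠ 0 := hi.2
            have hxi : x i ≠ 0 := by
              intro h0
              apply hx'i
              rw [hx'def]; simp only [WithLp.ofLp_toLp]; rw [h0, resc_zero]
            have htlt : t < |x i| := by
              rcases lt_or_eq_of_le (htle i hxi) with h | h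
              · exact h
              · exfalso
                apply hx'i
                rw [hx'def]; simp only [WithLp.ofLp_toLp]
                rcases (abs_eq ht0.le).1 h.symm with he | he
                · rw [he, resc_of_ge ht0.le le_rfl, sub_self, zero_div]
                · rw [he, resc_of_le ht0.le le_rfl, neg_add_cancel, zero_div]
            have habs : |x' i| = (|x i| - t) / (1 - t) := by
              rcases lt_trichotomy (x i) 0 with h | h | h
              · have h2 : x i ≤ -t := by
                  have := abs_of_neg h; linarith
                rw [hx'def]; simp only [WithLp.ofLp_toLp]
                have h3 : x i + t < 0 := by
                  have := abs_of_neg h; linarith [htlt]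
                rw [resc_of_le ht0.le h2, abs_div, abs_of_pos (by linarith : (0:ℝ) < 1 - t),
                  abs_of_neg h3, abs_of_neg h]
                ring_nf
              · exact absurd h hxi
              · have h2 : t ≤ x i := by have := abs_of_pos h; linarith
                rw [hx'def]; simp only [WithLp.ofLp_toLp]
                rw [resc_of_ge ht0.le h2, abs_div, abs_of_pos (by linarith : (0:ℝ) < 1 - t),
                  abs_of_nonneg (by linarith : (0:ℝ) ≤ x i - t), abs_of_pos h]
            apply Finset.mem_image.2
            refine ⟨|x i|, Finset.mem_erase.2 ⟨ne_of_gt htlt, Finset.mem_image_of_mem _ (by simp [hxi])⟩, ?_⟩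
            rw [← hvi, habs]
          have hcard : (Vx x').card ≤ m := by
            have h1 := Finset.card_le_card hsubV
            have h2 := Finset.card_image_le
              (f := fun v => (v - t) / (1 - t)) (s := (Vx x).erase t)
            have h3 := Finset.card_erase_of_mem htmem
            omega
          have hx'hull := ih x' hx'K hcard
          have hxeq : x = t • q + (1 - t) • x' := by
            ext i
            have happ : (t • q + (1 - t) • x') i = t * q i + (1 - t) * x' i := rfl
            rw [happ]
            show x i = t * Real.sign (x i) + (1 - t) * resc t (x i)
            by_cases h0 : x i = 0
            · rw [h0, Real.sign_zero, resc_zero]; ring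
            · rcases lt_trichotomy (x i) 0 with h | h | h
              · have h2 : x i ≤ -t := by have := abs_of_neg h; have := htle i h0; linarith
                rw [Real.sign_of_neg h, resc_of_le ht0.le h2]
                field_simp
                ring
              · exact absurd h h0
              · have h2 : t ≤ x i := by have := abs_of_pos h; have := htle i h0; linarith
                rw [Real.sign_of_pos h, resc_of_ge ht0.le h2]
                field_simp
                ring
          rw [hxeq]
          exact (convex_convexHull ℝ P) (subset_convexHull ℝ P hqP) hx'hull ht0.le
            (by linarith) (by ring)
  refine ⟨P, hPfin, hchain, Subset.antisymm (fun x hx => main (Vx x).card x hx le_rfl) ?_⟩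
  exact convexHull_min hPK (convex_sInterS hS)

end Stmt10Aux

namespace Stmt10Aux
variable {n : ℕ}

lemma indep_congr {s : Finset (E n)} {t : Set (E n)} (h : ∀ x, x ∈ s ↔ x ∈ t)
    (ht : AffineIndependent ℝ ((↑) : t → E n)) :
    AffineIndependent ℝ ((↑) : {x : E n // x ∈ s} → E n) := by
  exact (affineIndependent_equiv (Equiv.subtypeEquivRight h)).2 ht

lemma indep_congr' {s : Finset (E n)} {t : Set (E n)} (h : ∀ x, x ∈ s ↔ x ∈ t)
    (hs : AffineIndependent ℝ ((↑) : {x : E n // x ∈ s} → E n)) :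
    AffineIndependent ℝ ((↑) : t → E n) := by
  exact (affineIndependent_equiv (Equiv.subtypeEquivRight h)).1 hs

lemma indep_map {t : Set (E n)} (f : E n ≃ᵃ[ℝ] E n)
    (h : AffineIndependent ℝ ((↑) : t → E n)) :
    AffineIndependent ℝ ((↑) : (⇑f '' t) → E n) := by
  have h1 : AffineIndependent ℝ (⇑f.toAffineMap ∘ ((↑) : t → E n)) :=
    h.map' f.toAffineMap f.injective
  exact (affineIndependent_equiv (Equiv.Set.image ⇑f t f.injective)).1 h1

/-- A conformal affine map as an affine equivalence. -/
lemma confAffine_equiv {L : E n → E n} (hL : ConfAffine n L) :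
    ∃ A : E n ≃ᵃ[ℝ] E n, ⇑A = L := by
  obtain ⟨c, U, v, hc, hLdef⟩ := hL
  refine ⟨(U.toLinearEquiv.trans
      (LinearEquiv.smulOfNeZero ℝ (E n) c (ne_of_gt hc))).toAffineEquiv.trans
      (AffineEquiv.constVAdd ℝ (E n) v), ?_⟩
  funext x
  rw [hLdef x]
  simp [AffineEquiv.trans_apply, LinearEquiv.coe_toAffineEquiv, AffineEquiv.constVAdd_apply,
    LinearEquiv.trans_apply, LinearEquiv.smulOfNeZero, add_comm]
  rfl

end Stmt10Aux


open Stmt10Aux in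
/-- Every element of `K_n` is a simplex, i.e. the convex hull of a finite affinely
independent set of points. -/
theorem stmt10 (n : ℕ) (hn : 1 ≤ n) (K : Set (E n)) (hK : K ∈ Kcal n) :
    ∃ s : Finset (E n),
      AffineIndependent ℝ (Subtype.val : {x : E n // x ∈ s} → E n) ∧
      K = convexHull ℝ (s : Set (E n)) := by
  classical
  obtain ⟨c, e, hface, hKo⟩ := hK
  rcases hKo with ⟨he0, hKc⟩ | ⟨he, L, hL, hLc, H, hH, hKH⟩
  · -- 0-dimensional face: a singleton
    obtain ⟨J, hJ1, hJ2, hJ3, hJ4⟩ := hface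
    have hempty : {i : Fin n | J i = Icc (-1:ℝ) 1} = ∅ :=
      (Set.ncard_eq_zero (Set.toFinite _)).1 (by rw [hJ3]; exact he0)
    have hsing : ∀ i : Fin n, J i = {-1} ∨ J i = {1} := by
      intro i
      rcases hJ1 i i.isLt with h | h | h
      · exfalso
        have hmem : i ∈ {i : Fin n | J i = Icc (-1:ℝ) 1} := h
        rw [hempty] at hmem
        exact hmem
      · exact Or.inl h
      · exact Or.inr h
    have hne11 : ({-1} : Set ℝ) ≠ {1} := by
      intro hc2
      have h1 : (-1:ℝ) ∈ ({-1} : Set ℝ) := rfl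
      rw [hc2] at h1
      simp only [Set.mem_singleton_iff] at h1
      norm_num at h1
    set p : E n := WithLp.toLp 2 (fun i => if J i = {(1:ℝ)} then (1:ℝ) else -1) with hp
    have hcp : c = {p} := by
      rw [hJ4]
      ext x
      simp only [Set.mem_setOf_eq, Set.mem_singleton_iff]
      constructor
      · intro hx
        ext i
        rcases hsing i with h | h
        · have hxi := hx i
          rw [h] at hxi
          simp only [Set.mem_singleton_iff] at hxi
          have hne : J i ≠ {(1:ℝ)} := h ▸ hne11
          simp only [hp, WithLp.ofLp_toLp, if_neg hne]
          exact hxi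
        · have hxi := hx i
          rw [h] at hxi
          simp only [Set.mem_singleton_iff] at hxi
          simp only [hp, WithLp.ofLp_toLp, if_pos h]
          exact hxi
      · rintro rfl i
        rcases hsing i with h | h
        · have hne : J i ≠ {(1:ℝ)} := h ▸ hne11
          rw [h]
          simp only [hp, WithLp.ofLp_toLp, if_neg hne, Set.mem_singleton_iff]
        · rw [h]
          simp only [hp, WithLp.ofLp_toLp, if_pos h, Set.mem_singleton_iff]
    refine ⟨{p}, ?_, ?_⟩
    · have hss : Subsingleton {x : E n // x ∈ ({p} : Finset (E n))} := by
        constructor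
        rintro ⟨a, ha⟩ ⟨b, hb⟩
        simp only [Finset.mem_singleton] at ha hb
        subst ha; subst hb; rfl
      exact affineIndependent_of_subsingleton ℝ _
    · rw [hKc, hcp, Finset.coe_singleton, convexHull_singleton]
  · -- positive-dimensional case
    obtain ⟨S, hS, rfl⟩ := hH
    obtain ⟨P, hPfin, hchain, hPeq⟩ := core hn he hS
    obtain ⟨A, hA⟩ := confAffine_equiv hL
    have hindepP : AffineIndependent ℝ ((↑) : P → E n) := by
      apply indep_congr' (s := hPfin.toFinset) (fun x => hPfin.mem_toFinset)
      apply chain_affineIndependent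
      intro a ha b hb
      exact hchain a (hPfin.mem_toFinset.1 ha) b (hPfin.mem_toFinset.1 hb)
    have hQ : AffineIndependent ℝ ((↑) : (⇑A.symm '' P) → E n) := indep_map A.symm hindepP
    have hQfin : (⇑A.symm '' P).Finite := hPfin.image _
    refine ⟨hQfin.toFinset, indep_congr (fun x => hQfin.mem_toFinset) hQ, ?_⟩
    rw [hKH, hPeq, Set.Finite.coe_toFinset]
    have h1 : L ⁻¹' (convexHull ℝ P) = ⇑A ⁻¹' (convexHull ℝ P) := by rw [hA]
    have h2 : ⇑A ⁻¹' (convexHull ℝ P) = ⇑A.symm '' (convexHull ℝ P) := by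
      ext z
      simp only [Set.mem_preimage, Set.mem_image]
      constructor
      · intro hz
        exact ⟨A z, hz, A.symm_apply_apply z⟩
      · rintro ⟨y, hy, rfl⟩
        rwa [A.apply_symm_apply]
    rw [h1, h2]
    calc ⇑A.symm '' (convexHull ℝ P)
        = ⇑A.symm.toAffineMap '' (convexHull ℝ P) := by rw [AffineEquiv.coe_toAffineMap]
      _ = convexHull ℝ (⇑A.symm.toAffineMap '' P) := AffineMap.image_convexHull _ _
      _ = convexHull ℝ (⇑A.symm '' P) := by rw [AffineEquiv.coe_toAffineMap]
end
end

section
/- For every integer l ≥ 1, the collection K_{n,l} refines K_n: every element of K_{n,l} is contained in some element of K_n, and every element of K_n is the union of the elements of K_{n,l} contained in it. -/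
open Set Function

noncomputable section

namespace SP

lemma mem_Icube {n : ℕ} {x : E n} : x ∈ Icube n ↔ ∀ i, -1 ≤ x i ∧ x i ≤ 1 := by
  constructor
  · rintro ⟨h1, _⟩ i; exact Set.mem_Icc.1 (h1 i i.isLt)
  · intro h
    exact ⟨fun i _ => Set.mem_Icc.2 (h i), fun i hi => absurd i.isLt (not_lt.2 hi)⟩

/-- concrete piece -/
def CP (n : ℕ) (p : Fin n → Option ℝ) (T : Set (Fin n × Fin n × ℝ × ℝ)) : Set (E n) :=
  {x | x ∈ Icube n ∧ (∀ i s, p i = some s → x i = s) ∧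
    ∀ t ∈ T, t.2.2.2 * x t.2.1 ≤ t.2.2.1 * x t.1}

def ValidCP (n : ℕ) (p : Fin n → Option ℝ) (T : Set (Fin n × Fin n × ℝ × ℝ)) : Prop :=
  (∀ i, p i = none ∨ p i = some 1 ∨ p i = some (-1)) ∧
  (∀ t ∈ T, p t.1 = none ∧ p t.2.1 = none ∧ (t.2.2.1 = 1 ∨ t.2.2.1 = -1) ∧
      (t.2.2.2 = 1 ∨ t.2.2.2 = -1)) ∧
  ∀ i j, p i = none → p j = none →
    ((i,j,1,-1) ∈ T ∨ (i,j,-1,1) ∈ T ∨ (j,i,1,-1) ∈ T ∨ (j,i,-1,1) ∈ T) ∧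
    ((i,j,1,1) ∈ T ∨ (i,j,-1,-1) ∈ T ∨ (j,i,1,1) ∈ T ∨ (j,i,-1,-1) ∈ T)

lemma cp_side_add {n : ℕ} {p T} (hv : ValidCP n p T) (i j : Fin n) :
    (∀ x ∈ CP n p T, 0 ≤ x i + x j) ∨ (∀ x ∈ CP n p T, x i + x j ≤ 0) := by
  obtain ⟨hvals, hT, hfund⟩ := hv
  rcases hvals i with hi | hi | hi
  · rcases hvals j with hj | hj | hj
    · rcases (hfund i j hi hj).1 with h | h | h | h
      · left; intro x hx; have := hx.2.2 _ h; simp at this; linarith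
      · right; intro x hx; have := hx.2.2 _ h; simp at this; linarith
      · left; intro x hx; have := hx.2.2 _ h; simp at this; linarith
      · right; intro x hx; have := hx.2.2 _ h; simp at this; linarith
    · left; intro x hx
      have h1 := hx.2.1 j 1 hj
      have h2 := (mem_Icube.1 hx.1 i).1
      linarith
    · right; intro x hx
      have h1 := hx.2.1 j (-1) hj
      have h2 := (mem_Icube.1 hx.1 i).2
      linarith
  · left; intro x hx
    have h1 := hx.2.1 i 1 hi
    have h2 := (mem_Icube.1 hx.1 j).1
    linarith
  · right; intro x hx
    have h1 := hx.2.1 i (-1) hi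
    have h2 := (mem_Icube.1 hx.1 j).2
    linarith

lemma cp_side_sub {n : ℕ} {p T} (hv : ValidCP n p T) (i j : Fin n) :
    (∀ x ∈ CP n p T, 0 ≤ x i - x j) ∨ (∀ x ∈ CP n p T, x i - x j ≤ 0) := by
  obtain ⟨hvals, hT, hfund⟩ := hv
  rcases hvals i with hi | hi | hi
  · rcases hvals j with hj | hj | hj
    · rcases (hfund i j hi hj).2 with h | h | h | h
      · left; intro x hx; have := hx.2.2 _ h; simp at this; linarith
      · right; intro x hx; have := hx.2.2 _ h; simp at this; linarith
      · right; intro x hx; have := hx.2.2 _ h; simp at this; linarith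
      · left; intro x hx; have := hx.2.2 _ h; simp at this; linarith
    · right; intro x hx
      have h1 := hx.2.1 j 1 hj
      have h2 := (mem_Icube.1 hx.1 i).2
      linarith
    · left; intro x hx
      have h1 := hx.2.1 j (-1) hj
      have h2 := (mem_Icube.1 hx.1 i).1
      linarith
  · left; intro x hx
    have h1 := hx.2.1 i 1 hi
    have h2 := (mem_Icube.1 hx.1 j).2
    linarith
  · right; intro x hx
    have h1 := hx.2.1 i (-1) hi
    have h2 := (mem_Icube.1 hx.1 j).1
    linarith

end SP
namespace SP

lemma exists_perm {n : ℕ} (Fr : Finset (Fin n)) :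
    ∃ σ : Equiv.Perm (Fin n), ∀ i : Fin n, ((i : ℕ) < Fr.card ↔ σ i ∈ Fr) := by
  classical
  set e := Fr.card with he
  have hen : e ≤ n := by simpa using Fr.card_le_univ
  have hc : Frᶜ.card = n - e := by
    rw [Finset.card_compl, Fintype.card_fin]
  have hsum : e + (n - e) = n := Nat.add_sub_cancel' hen
  let eF : {x // x ∈ Fr} ≃ Fin e := Fr.equivFinOfCardEq rfl
  let eC : {x // x ∈ Frᶜ} ≃ Fin (n - e) := Frᶜ.equivFinOfCardEq hc
  let eC' : {x // x ∉ Fr} ≃ Fin (n - e) :=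
    (Equiv.subtypeEquivRight (fun x => (Finset.mem_compl).symm)).trans eC
  let σ : Equiv.Perm (Fin n) :=
    ((finCongr hsum.symm).trans ((finSumFinEquiv.symm).trans
      ((Equiv.sumCongr eF.symm eC'.symm).trans (Equiv.sumCompl (· ∈ Fr)))))
  refine ⟨σ, fun i => ?_⟩
  rcases lt_or_ge (i : ℕ) e with h | h
  · have key : finSumFinEquiv.symm (finCongr hsum.symm i) = Sum.inl ⟨(i : ℕ), h⟩ := by
      have : finCongr hsum.symm i = Fin.castAdd (n - e) ⟨(i : ℕ), h⟩ := by
        ext; simp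
      rw [this, finSumFinEquiv_symm_apply_castAdd]
    have : σ i = ↑(eF.symm ⟨(i:ℕ), h⟩) := by
      simp only [σ, Equiv.trans_apply, key, Equiv.sumCongr_apply, Sum.map_inl,
        Equiv.sumCompl_apply_inl]
    simp [this, h]
  · have h2 : (i : ℕ) - e < n - e := by omega
    have key : finSumFinEquiv.symm (finCongr hsum.symm i) = Sum.inr ⟨(i : ℕ) - e, h2⟩ := by
      have : finCongr hsum.symm i = Fin.natAdd e ⟨(i : ℕ) - e, h2⟩ := by
        ext; simp; omega
      rw [this, finSumFinEquiv_symm_apply_natAdd]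
    have : σ i = ↑(eC'.symm ⟨(i:ℕ) - e, h2⟩) := by
      simp only [σ, Equiv.trans_apply, key, Equiv.sumCongr_apply, Sum.map_inr,
        Equiv.sumCompl_apply_inr]
    have hni : σ i ∉ Fr := by rw [this]; exact (eC'.symm _).2
    simp [hni]; omega

/-- coordinate-permutation isometry: `(permIso σ) x i = x (σ i)` -/
def permIso {n : ℕ} (σ : Equiv.Perm (Fin n)) : E n ≃ₗᵢ[ℝ] E n :=
  (LinearIsometryEquiv.piLpCongrLeft 2 ℝ ℝ σ.symm)

lemma permIso_apply {n : ℕ} (σ : Equiv.Perm (Fin n)) (x : E n) (i : Fin n) :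
    permIso σ x i = x (σ i) := by
  simp only [permIso, LinearIsometryEquiv.piLpCongrLeft]
  rfl

end SP
namespace SP

lemma Hswap {n d : ℕ} (i j : Fin n) (a b : ℝ) :
    HsetD n d i j a b = HsetD n d j i (-b) (-a) := by
  ext x
  constructor
  · rintro ⟨h1, h2⟩; exact ⟨h1, by linarith⟩
  · rintro ⟨h1, h2⟩; exact ⟨h1, by linarith⟩

/-- the interval/singleton data of a pinning -/
def pinJ {n : ℕ} (p : Fin n → Option ℝ) : Fin n → Set ℝ := fun i =>
  match p i with
  | none => Set.Icc (-1 : ℝ) 1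
  | some t => {t}

lemma pinJ_none {n : ℕ} {p : Fin n → Option ℝ} {i : Fin n} (h : p i = none) :
    pinJ p i = Set.Icc (-1 : ℝ) 1 := by unfold pinJ; rw [h]

lemma pinJ_some {n : ℕ} {p : Fin n → Option ℝ} {i : Fin n} {t : ℝ} (h : p i = some t) :
    pinJ p i = {t} := by unfold pinJ; rw [h]

/-- the face associated to a pinning -/
def faceOf {n : ℕ} (p : Fin n → Option ℝ) : Set (E n) := {x | ∀ i, x i ∈ pinJ p i}

lemma mem_faceOf {n : ℕ} {p : Fin n → Option ℝ} {x : E n} :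
    x ∈ faceOf p ↔ ((∀ i, p i = none → x i ∈ Set.Icc (-1:ℝ) 1) ∧
      (∀ i t, p i = some t → x i = t)) := by
  constructor
  · intro hx
    constructor
    · intro i hi; have := hx i; rwa [pinJ_none hi] at this
    · intro i t hi; have := hx i; rwa [pinJ_some hi] at this
  · rintro ⟨h1, h2⟩ i
    rcases h : p i with _ | t
    · rw [pinJ_none h]; exact h1 i h
    · rw [pinJ_some h]; exact h2 i t h

lemma cp_mem_Kcal {n : ℕ} {p : Fin n → Option ℝ} {T : Set (Fin n × Fin n × ℝ × ℝ)}
    (hv : ValidCP n p T) : CP n p T ∈ Kcal n := by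
  classical
  obtain ⟨hvals, hT, hfund⟩ := hv
  set Fr : Finset (Fin n) := Finset.univ.filter (fun i => p i = none) with hFr
  have hmemFr : ∀ i, i ∈ Fr ↔ p i = none := by intro i; simp [hFr]
  set e := Fr.card with he
  set s : Fin n → ℝ := fun i => (p i).getD 0 with hs
  have hpin : ∀ i, p i ≠ none → p i = some (s i) ∧ (s i = 1 ∨ s i = -1) := by
    intro i hi
    rcases hvals i with h | h | h
    · exact absurd h hi
    · simp [hs, h]
    · simp [hs, h]
  set c : Set (E n) := faceOf p with hc
  -- face properties
  have hJcases : ∀ i : Fin n, (i : ℕ) < n →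
      (pinJ p i = Set.Icc (-1:ℝ) 1 ∨ pinJ p i = {-1} ∨ pinJ p i = {1}) := by
    intro i _
    rcases hvals i with h | h | h
    · left; exact pinJ_none h
    · right; right; exact pinJ_some h
    · right; left; exact pinJ_some h
  have hJfree : ∀ i, (pinJ p i = Set.Icc (-1:ℝ) 1 ↔ p i = none) := by
    intro i
    constructor
    · intro heq
      by_contra h
      rw [pinJ_some (hpin i h).1] at heq
      have h0 : (0:ℝ) ∈ ({s i} : Set ℝ) := by rw [heq]; norm_num
      have h1 : s i = 0 := (Set.mem_singleton_iff.1 h0).symm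
      rcases (hpin i h).2 with hh | hh <;> rw [hh] at h1 <;> norm_num at h1
    · intro hq; exact pinJ_none hq
  have hface : IsFaceD n n c e := by
    refine ⟨pinJ p, hJcases, fun i hi => absurd i.isLt (not_lt.2 hi), ?_, rfl⟩
    have : {i : Fin n | pinJ p i = Set.Icc (-1:ℝ) 1} = (↑Fr : Set (Fin n)) := by
      ext i; simp only [Set.mem_setOf_eq, Finset.coe_filter, hJfree i, hmemFr i,
        Finset.mem_coe]
    rw [this, Set.ncard_coe_finset]
  have hcsub : c ⊆ Icube n := by
    intro x hx
    rw [mem_Icube]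
    intro i
    by_cases hi : p i = none
    · exact Set.mem_Icc.1 ((mem_faceOf.1 hx).1 i hi)
    · have := (mem_faceOf.1 hx).2 i (s i) (hpin i hi).1
      rcases (hpin i hi).2 with h | h <;> rw [this, h] <;> norm_num
  have hCPc : ∀ x, x ∈ CP n p T → x ∈ c := by
    intro x hx
    rw [hc, mem_faceOf]
    constructor
    · intro i _; exact Set.mem_Icc.2 (mem_Icube.1 hx.1 i)
    · intro i t ht; exact hx.2.1 i t ht
  rcases Nat.eq_zero_or_pos e with he0 | he1
  -- case e = 0 : vertex
  · have hallpin : ∀ i, p i ≠ none := by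
      intro i hi
      have h1 : i ∈ Fr := (hmemFr i).2 hi
      have h2 : Fr = ∅ := Finset.card_eq_zero.1 he0
      rw [h2] at h1
      exact absurd h1 (Finset.notMem_empty i)
    have hKc : CP n p T = c := by
      apply Set.Subset.antisymm
      · intro x hx; exact hCPc x hx
      · intro x hx
        refine ⟨hcsub hx, ?_, ?_⟩
        · intro i s' hps'
          exact (mem_faceOf.1 hx).2 i s' hps'
        · intro t ht
          exact absurd (hT t ht).1 (hallpin t.1)
    exact ⟨c, e, hface, Or.inl ⟨he0, hKc⟩⟩
  -- case e ≥ 1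
  · obtain ⟨σ, hσ⟩ := exists_perm Fr
    have hσ' : ∀ i : Fin n, ((i : ℕ) < e ↔ p (σ i) = none) := by
      intro i; rw [← hmemFr (σ i)]; exact hσ i
    set v : E n := (WithLp.toLp 2 (fun i' => if (i' : ℕ) < e then 0 else -(s (σ i'))) : E n) with hv
    set L : E n → E n := fun x => (1:ℝ) • (permIso σ x) + v with hL
    have hLapply : ∀ x i', L x i' = x (σ i') + (if (i' : ℕ) < e then 0 else -(s (σ i'))) := by
      intro x i'
      show ((1:ℝ) • (permIso σ x) + v) i' = _
      rw [PiLp.add_apply, PiLp.smul_apply, one_smul, permIso_apply]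
    have hconf : ConfAffine n L := ⟨1, permIso σ, v, one_pos, fun x => rfl⟩
    -- image of c
    have himg : L '' c = IcubeD n e := by
      apply Set.Subset.antisymm
      · rintro _ ⟨x, hx, rfl⟩
        constructor
        · intro i' hi'
          rw [hLapply, if_pos hi']
          have := (mem_faceOf.1 hx).1 (σ i') ((hσ' i').1 hi')
          simpa using this
        · intro i' hi'
          have hni' : ¬ ((i':ℕ) < e) := not_lt.2 hi'
          rw [hLapply, if_neg hni']
          have hpn : p (σ i') ≠ none := fun hh => hni' ((hσ' i').2 hh)
          have := (mem_faceOf.1 hx).2 (σ i') (s (σ i')) (hpin _ hpn).1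
          rw [this]; ring
      · intro z hz
        set x : E n := (WithLp.toLp 2 (fun j => if p j = none then z (σ.symm j) else s j) : E n) with hx
        have hxeval_free : ∀ j, p j = none → x j = z (σ.symm j) := by
          intro j hj
          show (if p j = none then z (σ.symm j) else s j) = _
          rw [if_pos hj]
        have hxeval_pin : ∀ j, p j ≠ none → x j = s j := by
          intro j hj
          show (if p j = none then z (σ.symm j) else s j) = _
          rw [if_neg hj]
        have hxc : x ∈ c := by
          rw [hc, mem_faceOf]
          constructor
          · intro j hj
            rw [hxeval_free j hj]
            have hlt : ((σ.symm j : Fin n) : ℕ) < e := by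
              rw [hσ' (σ.symm j), Equiv.apply_symm_apply]; exact hj
            exact hz.1 (σ.symm j) hlt
          · intro j t hj
            rw [hxeval_pin j (by rw [hj]; exact Option.some_ne_none _)]
            have := (hpin j (by rw [hj]; exact Option.some_ne_none _)).1
            rw [this] at hj
            exact Option.some_injective ℝ hj
        refine ⟨x, hxc, ?_⟩
        ext i'
        rw [hLapply]
        by_cases hi' : (i' : ℕ) < e
        · rw [if_pos hi']
          have hfree : p (σ i') = none := (hσ' i').1 hi'
          rw [hxeval_free _ hfree, Equiv.symm_apply_apply]
          ring
        · rw [if_neg hi']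
          have hpinned : p (σ i') ≠ none := fun hh => hi' ((hσ' i').2 hh)
          rw [hxeval_pin _ hpinned]
          have : z i' = 0 := hz.2 i' (not_lt.1 hi')
          rw [this]; ring
    -- the fundamental subset
    set S : Set (Set (E n)) := {H | ∃ i' j' : Fin n, (i' : ℕ) < e ∧ (j' : ℕ) < e ∧
      ∃ a b : ℝ, (a = 1 ∨ a = -1) ∧ (b = 1 ∨ b = -1) ∧ (σ i', σ j', a, b) ∈ T ∧
      H = HsetD n e i' j' a b} with hS
    have hfund' : IsFundSubsetD n e S := by
      constructor
      · rintro H ⟨i', j', hi', hj', a, b, ha, hb, hab, rfl⟩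
        exact ⟨i', j', hi', hj', a, b, ha, hb, rfl⟩
      · intro i' j' hi' hj' _
        have hPfree : p (σ i') = none := (hσ' i').1 hi'
        have hQfree : p (σ j') = none := (hσ' j').1 hj'
        obtain ⟨cl1, cl2⟩ := hfund (σ i') (σ j') hPfree hQfree
        constructor
        · rcases cl1 with h | h | h | h
          · exact Or.inl ⟨i', j', hi', hj', 1, -1, Or.inl rfl, Or.inr rfl, h, rfl⟩
          · exact Or.inr ⟨i', j', hi', hj', -1, 1, Or.inr rfl, Or.inl rfl, h, rfl⟩
          · refine Or.inl ?_
            have heq : HsetD n e i' j' 1 (-1) = HsetD n e j' i' 1 (-1) := by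
              rw [Hswap j' i' 1 (-1)]; norm_num
            rw [heq]
            exact ⟨j', i', hj', hi', 1, -1, Or.inl rfl, Or.inr rfl, h, rfl⟩
          · refine Or.inr ?_
            have heq : HsetD n e i' j' (-1) 1 = HsetD n e j' i' (-1) 1 := by
              rw [Hswap j' i' (-1) 1]; norm_num
            rw [heq]
            exact ⟨j', i', hj', hi', -1, 1, Or.inr rfl, Or.inl rfl, h, rfl⟩
        · rcases cl2 with h | h | h | h
          · exact Or.inl ⟨i', j', hi', hj', 1, 1, Or.inl rfl, Or.inl rfl, h, rfl⟩
          · exact Or.inr ⟨i', j', hi', hj', -1, -1, Or.inr rfl, Or.inr rfl, h, rfl⟩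
          · refine Or.inr ?_
            have heq : HsetD n e i' j' (-1) (-1) = HsetD n e j' i' 1 1 := by
              rw [Hswap j' i' 1 1]
            rw [heq]
            exact ⟨j', i', hj', hi', 1, 1, Or.inl rfl, Or.inl rfl, h, rfl⟩
          · refine Or.inl ?_
            have heq : HsetD n e i' j' 1 1 = HsetD n e j' i' (-1) (-1) := by
              rw [Hswap j' i' (-1) (-1)]; norm_num
            rw [heq]
            exact ⟨j', i', hj', hi', -1, -1, Or.inr rfl, Or.inr rfl, h, rfl⟩
    -- K = L ⁻¹' ⋂₀ S
    have hKeq : CP n p T = L ⁻¹' (⋂₀ S) := by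
      apply Set.Subset.antisymm
      · intro x hx
        have hxc : x ∈ c := hCPc x hx
        have hLx : L x ∈ IcubeD n e := by rw [← himg]; exact ⟨x, hxc, rfl⟩
        intro H hH
        obtain ⟨i', j', hi', hj', a, b, ha, hb, hab, rfl⟩ := hH
        refine ⟨hLx, ?_⟩
        have h1 : L x i' = x (σ i') := by rw [hLapply, if_pos hi']; ring
        have h2 : L x j' = x (σ j') := by rw [hLapply, if_pos hj']; ring
        rw [h1, h2]
        exact hx.2.2 (σ i', σ j', a, b) hab
      · intro x hx
        have hex : ∃ H₀, H₀ ∈ S := by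
          have h0 : (0 : ℕ) < n := lt_of_lt_of_le he1 (by simpa using Fr.card_le_univ)
          have hi0e : ((⟨0, h0⟩ : Fin n) : ℕ) < e := he1
          have hfree : p (σ ⟨0, h0⟩) = none := (hσ' _).1 hi0e
          obtain ⟨cl1, _⟩ := hfund (σ ⟨0, h0⟩) (σ ⟨0, h0⟩) hfree hfree
          rcases cl1 with h | h | h | h
          · exact ⟨_, ⟨_, _, hi0e, hi0e, 1, -1, Or.inl rfl, Or.inr rfl, h, rfl⟩⟩
          · exact ⟨_, ⟨_, _, hi0e, hi0e, -1, 1, Or.inr rfl, Or.inl rfl, h, rfl⟩⟩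
          · exact ⟨_, ⟨_, _, hi0e, hi0e, 1, -1, Or.inl rfl, Or.inr rfl, h, rfl⟩⟩
          · exact ⟨_, ⟨_, _, hi0e, hi0e, -1, 1, Or.inr rfl, Or.inl rfl, h, rfl⟩⟩
        obtain ⟨H₀, hH₀⟩ := hex
        have hLcube : L x ∈ IcubeD n e := by
          have hmem := hx H₀ hH₀
          obtain ⟨i', j', hi', hj', a, b, ha, hb, hab, rfl⟩ := hH₀
          exact hmem.1
        have hxc : x ∈ c := by
          rw [hc, mem_faceOf]
          constructor
          · intro jj hjj
            have hjj' : ((σ.symm jj : Fin n) : ℕ) < e := by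
              rw [hσ' (σ.symm jj), Equiv.apply_symm_apply]; exact hjj
            have h2 := hLcube.1 (σ.symm jj) hjj'
            rw [hLapply, if_pos hjj', Equiv.apply_symm_apply] at h2
            simpa using h2
          · intro jj t hjj
            have hpn : p jj ≠ none := by rw [hjj]; exact Option.some_ne_none _
            have hjj' : ¬ (((σ.symm jj : Fin n) : ℕ) < e) := by
              rw [hσ' (σ.symm jj), Equiv.apply_symm_apply]; exact fun hh => hpn hh
            have h2 := hLcube.2 (σ.symm jj) (not_lt.1 hjj')
            rw [hLapply, if_neg hjj', Equiv.apply_symm_apply] at h2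
            have hxj : x jj = s jj := by linarith
            have hst : s jj = t := by
              have := (hpin jj hpn).1
              rw [this] at hjj
              exact Option.some_injective ℝ hjj
            rw [hxj, hst]
        refine ⟨hcsub hxc, ?_, ?_⟩
        · intro i s' hps'
          exact (mem_faceOf.1 hxc).2 i s' hps'
        · rintro ⟨i, j, a, b⟩ ht
          obtain ⟨hpi, hpj, ha, hb⟩ := hT _ ht
          have hi'e : ((σ.symm i : Fin n) : ℕ) < e := by
            rw [hσ' (σ.symm i), Equiv.apply_symm_apply]; exact hpi
          have hj'e : ((σ.symm j : Fin n) : ℕ) < e := by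
            rw [hσ' (σ.symm j), Equiv.apply_symm_apply]; exact hpj
          have hmemS : HsetD n e (σ.symm i) (σ.symm j) a b ∈ S := by
            refine ⟨σ.symm i, σ.symm j, hi'e, hj'e, a, b, ha, hb, ?_, rfl⟩
            rw [Equiv.apply_symm_apply, Equiv.apply_symm_apply]
            exact ht
          have hmem := hx _ hmemS
          have h1 : L x (σ.symm i) = x i := by
            rw [hLapply, if_pos hi'e, Equiv.apply_symm_apply]; ring
          have h2 : L x (σ.symm j) = x j := by
            rw [hLapply, if_pos hj'e, Equiv.apply_symm_apply]; ring
          have h3 := hmem.2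
          rw [h1, h2] at h3
          exact h3
    exact ⟨c, e, hface, Or.inr ⟨he1, L, hconf, himg, ⋂₀ S, ⟨S, hfund', rfl⟩, hKeq⟩⟩

end SP
namespace SP

lemma pm_mul {a b : ℝ} (ha : a = 1 ∨ a = -1) (hb : b = 1 ∨ b = -1) :
    a * b = 1 ∨ a * b = -1 := by
  rcases ha with h | h <;> rcases hb with h' | h' <;> rw [h, h'] <;> norm_num

lemma pm_abs {a : ℝ} (ha : |a| = 1) : a = 1 ∨ a = -1 := abs_eq (by norm_num : (0:ℝ) ≤ 1) |>.1 ha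

/-- abstract "row" lemma -/
lemma row_abs {m : Type*} [Fintype m] [DecidableEq m] (A : Finset m) (ρ : m → ℝ) (D : ℝ)
    (hbd : ∀ t : m → ℝ, (∀ k ∈ A, |t k| ≤ 1) → |(∑ k ∈ A, ρ k * t k) + D| ≤ 1)
    (hhi : ∃ t : m → ℝ, (∀ k ∈ A, |t k| ≤ 1) ∧ (∑ k ∈ A, ρ k * t k) + D = 1)
    (hlo : ∃ t : m → ℝ, (∀ k ∈ A, |t k| ≤ 1) ∧ (∑ k ∈ A, ρ k * t k) + D = -1) :
    (∑ k ∈ A, |ρ k|) = 1 ∧ D = 0 := by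
  classical
  set Sig := ∑ k ∈ A, |ρ k| with hSig
  have hsgn : ∀ k, |(if (0:ℝ) ≤ ρ k then (1:ℝ) else -1)| ≤ 1 := by
    intro k; split <;> norm_num
  have hsum1 : (∑ k ∈ A, ρ k * (if (0:ℝ) ≤ ρ k then (1:ℝ) else -1)) = Sig := by
    rw [hSig]
    apply Finset.sum_congr rfl
    intro k _
    by_cases h : (0:ℝ) ≤ ρ k
    · rw [if_pos h, abs_of_nonneg h]; ring
    · rw [if_neg h, abs_of_neg (not_le.1 h)]; ring
  have hb1 := hbd (fun k => if (0:ℝ) ≤ ρ k then 1 else -1) (fun k _ => hsgn k)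
  rw [hsum1] at hb1
  have hb2 := hbd (fun k => -(if (0:ℝ) ≤ ρ k then 1 else -1))
    (fun k _ => by simpa using hsgn k)
  have hsum2 : (∑ k ∈ A, ρ k * (-(if (0:ℝ) ≤ ρ k then (1:ℝ) else -1))) = -Sig := by
    rw [← hsum1, ← Finset.sum_neg_distrib]
    apply Finset.sum_congr rfl
    intro k _; ring
  rw [hsum2] at hb2
  obtain ⟨t, hbt, ht⟩ := hhi
  obtain ⟨t', hbt', ht'⟩ := hlo
  have hup : ∑ k ∈ A, ρ k * t k ≤ Sig := by
    rw [hSig]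
    apply Finset.sum_le_sum
    intro k hk
    calc ρ k * t k ≤ |ρ k * t k| := le_abs_self _
    _ = |ρ k| * |t k| := abs_mul _ _
    _ ≤ |ρ k| * 1 := by
        apply mul_le_mul_of_nonneg_left (hbt k hk) (abs_nonneg _)
    _ = |ρ k| := mul_one _
  have hdn : -Sig ≤ ∑ k ∈ A, ρ k * t' k := by
    rw [hSig, ← Finset.sum_neg_distrib]
    apply Finset.sum_le_sum
    intro k hk
    have : |ρ k * t' k| ≤ |ρ k| := by
      rw [abs_mul]
      calc |ρ k| * |t' k| ≤ |ρ k| * 1 :=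
        mul_le_mul_of_nonneg_left (hbt' k hk) (abs_nonneg _)
      _ = |ρ k| := mul_one _
    have := neg_abs_le (ρ k * t' k)
    linarith
  have h1 := abs_le.1 hb1
  have h2 := abs_le.1 hb2
  constructor <;> linarith

/-- 0/1 dichotomy from ℓ¹ = ℓ² = 1 -/
lemma dichot01 {m : Type*} [DecidableEq m] (A : Finset m) (ρ : m → ℝ)
    (h1 : ∑ k ∈ A, |ρ k| = 1) (h2 : ∑ k ∈ A, (ρ k)^2 = 1) :
    ∀ k ∈ A, ρ k = 0 ∨ |ρ k| = 1 := by
  have hle : ∀ k ∈ A, |ρ k| ≤ 1 := by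
    intro k hk
    rw [← h1]
    exact Finset.single_le_sum (fun j _ => abs_nonneg (ρ j)) hk
  have hpt : ∀ k ∈ A, (ρ k)^2 ≤ |ρ k| := by
    intro k hk
    have : (ρ k)^2 = |ρ k| * |ρ k| := by
      rw [← abs_mul, abs_of_nonneg (mul_self_nonneg _), sq]
    rw [this]
    calc |ρ k| * |ρ k| ≤ |ρ k| * 1 := mul_le_mul_of_nonneg_left (hle k hk) (abs_nonneg _)
    _ = |ρ k| := mul_one _
  have heq : ∀ k ∈ A, (ρ k)^2 = |ρ k| := by
    by_contra hcon
    push_neg at hcon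
    obtain ⟨k₀, hk₀, hne⟩ := hcon
    have : ∑ k ∈ A, (ρ k)^2 < ∑ k ∈ A, |ρ k| :=
      Finset.sum_lt_sum hpt ⟨k₀, hk₀, lt_of_le_of_ne (hpt k₀ hk₀) hne⟩
    rw [h1, h2] at this
    exact lt_irrefl _ this
  intro k hk
  have := heq k hk
  have habs : |ρ k| * (|ρ k| - 1) = 0 := by
    have h' : (ρ k)^2 = |ρ k| * |ρ k| := by
      rw [← abs_mul, abs_of_nonneg (mul_self_nonneg _), sq]
    rw [h'] at this
    ring_nf
    ring_nf at this
    linarith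
  rcases mul_eq_zero.1 habs with h | h
  · left; exact abs_eq_zero.1 h
  · right; linarith

/-- unique support element from ℓ¹ = 1 and 0/1 entries -/
lemma unique_support {m : Type*} [DecidableEq m] (A : Finset m) (ρ : m → ℝ)
    (h1 : ∑ k ∈ A, |ρ k| = 1) (hd : ∀ k ∈ A, ρ k = 0 ∨ |ρ k| = 1) :
    ∃ k₀ ∈ A, |ρ k₀| = 1 ∧ ∀ k ∈ A, k ≠ k₀ → ρ k = 0 := by
  have hex : ∃ k₀ ∈ A, ρ k₀ ≠ 0 := by
    by_contra hcon
    push_neg at hcon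
    have : (∑ k ∈ A, |ρ k|) = 0 := by
      apply Finset.sum_eq_zero
      intro k hk; rw [hcon k hk]; simp
    rw [h1] at this; norm_num at this
  obtain ⟨k₀, hk₀A, hk₀⟩ := hex
  have hk₀1 : |ρ k₀| = 1 := by
    rcases hd k₀ hk₀A with h | h
    · exact absurd h hk₀
    · exact h
  refine ⟨k₀, hk₀A, hk₀1, ?_⟩
  intro k hk hne
  by_contra hc
  have hk1 : |ρ k| = 1 := by
    rcases hd k hk with h | h
    · exact absurd h hc
    · exact h
  have : (2:ℝ) ≤ ∑ j ∈ A, |ρ j| := by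
    have hsub : ({k, k₀} : Finset m) ⊆ A := by
      intro j hj
      rcases Finset.mem_insert.1 hj with h | h
      · rwa [h]
      · rw [Finset.mem_singleton.1 h]; exact hk₀A
    have hsum2 : ∑ j ∈ ({k, k₀} : Finset m), |ρ j| = 2 := by
      rw [Finset.sum_insert (by simp [hne]), Finset.sum_singleton, hk1, hk₀1]
      norm_num
    calc (2:ℝ) = ∑ j ∈ ({k, k₀} : Finset m), |ρ j| := hsum2.symm
    _ ≤ ∑ j ∈ A, |ρ j| := Finset.sum_le_sum_of_subset_of_nonneg hsub
        (fun j _ _ => abs_nonneg _)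
  rw [h1] at this; norm_num at this

lemma card_filter_lt (n e : ℕ) (he : e ≤ n) :
    (Finset.univ.filter (fun i : Fin n => (i : ℕ) < e)).card = e := by
  classical
  have himg : Finset.univ.filter (fun i : Fin n => (i : ℕ) < e) =
      (Finset.univ : Finset (Fin e)).image (Fin.castLE he) := by
    ext i
    simp only [Finset.mem_filter, Finset.mem_univ, true_and, Finset.mem_image]
    constructor
    · intro hi; exact ⟨⟨(i:ℕ), hi⟩, by apply Fin.ext; simp⟩
    · rintro ⟨j, rfl⟩; exact j.isLt
  rw [himg, Finset.card_image_of_injective _ (Fin.castLE_injective he)]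
  simp

end SP
namespace SP
open scoped RealInnerProductSpace

lemma iso_coord {n : ℕ} (U : E n ≃ₗᵢ[ℝ] E n) (y : E n) (i : Fin n) :
    U y i = ∑ k, (U (EuclideanSpace.single k (1:ℝ))) i * y k := by
  have h1 : U y i = ⟪EuclideanSpace.single i (1:ℝ), U y⟫ := by
    rw [EuclideanSpace.inner_single_left]; simp
  have h2 : ⟪EuclideanSpace.single i (1:ℝ), U y⟫
      = ⟪U.symm (EuclideanSpace.single i (1:ℝ)), y⟫ := by
    conv_lhs => rw [← U.apply_symm_apply (EuclideanSpace.single i (1:ℝ))]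
    exact U.inner_map_map _ _
  rw [h1, h2, PiLp.inner_apply]
  apply Finset.sum_congr rfl
  intro k _
  have h3 : (U.symm (EuclideanSpace.single i (1:ℝ))) k
      = (U (EuclideanSpace.single k (1:ℝ))) i := by
    have a1 : (U.symm (EuclideanSpace.single i (1:ℝ))) k
        = ⟪EuclideanSpace.single k (1:ℝ), U.symm (EuclideanSpace.single i 1)⟫ := by
      rw [EuclideanSpace.inner_single_left]; simp
    have a2 : ⟪EuclideanSpace.single k (1:ℝ), U.symm (EuclideanSpace.single i 1)⟫
        = ⟪U (EuclideanSpace.single k (1:ℝ)), EuclideanSpace.single i 1⟫ := by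
      conv_lhs => rw [← U.symm_apply_apply (EuclideanSpace.single k (1:ℝ))]
      exact U.symm.inner_map_map _ _
    have a3 : ⟪U (EuclideanSpace.single k (1:ℝ)), EuclideanSpace.single i 1⟫
        = (U (EuclideanSpace.single k (1:ℝ))) i := by
      rw [real_inner_comm, EuclideanSpace.inner_single_left]; simp
    rw [a1, a2, a3]
  rw [h3]
  simp [RCLike.inner_apply]
  ring

lemma iso_transpose {n : ℕ} (U : E n ≃ₗᵢ[ℝ] E n) (i k : Fin n) :
    (U.symm (EuclideanSpace.single i (1:ℝ))) k = (U (EuclideanSpace.single k (1:ℝ))) i := by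
  have a1 : (U.symm (EuclideanSpace.single i (1:ℝ))) k
      = ⟪EuclideanSpace.single k (1:ℝ), U.symm (EuclideanSpace.single i 1)⟫ := by
    rw [EuclideanSpace.inner_single_left]; simp
  have a2 : ⟪EuclideanSpace.single k (1:ℝ), U.symm (EuclideanSpace.single i 1)⟫
      = ⟪U (EuclideanSpace.single k (1:ℝ)), EuclideanSpace.single i 1⟫ := by
    conv_lhs => rw [← U.symm_apply_apply (EuclideanSpace.single k (1:ℝ))]
    exact U.symm.inner_map_map _ _
  have a3 : ⟪U (EuclideanSpace.single k (1:ℝ)), EuclideanSpace.single i 1⟫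
      = (U (EuclideanSpace.single k (1:ℝ))) i := by
    rw [real_inner_comm, EuclideanSpace.inner_single_left]; simp
  rw [a1, a2, a3]

lemma iso_col_norm {n : ℕ} (U : E n ≃ₗᵢ[ℝ] E n) (k : Fin n) :
    ∑ i, (U (EuclideanSpace.single k (1:ℝ))) i * (U (EuclideanSpace.single k (1:ℝ))) i = 1 := by
  have h := U.inner_map_map (EuclideanSpace.single k (1:ℝ)) (EuclideanSpace.single k (1:ℝ))
  rw [PiLp.inner_apply] at h
  have h2 : ⟪EuclideanSpace.single k (1:ℝ), EuclideanSpace.single k (1:ℝ)⟫ = 1 := by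
    rw [EuclideanSpace.inner_single_left]
    simp [EuclideanSpace.single_apply]
  rw [h2] at h
  simpa [RCLike.inner_apply, ← pow_two] using h

lemma fund_helper1 {n : ℕ} (T : Set (Fin n × Fin n × ℝ × ℝ)) (i j : Fin n)
    (h : ∃ a b : ℝ, (a = 1 ∨ a = -1) ∧ (b = 1 ∨ b = -1) ∧ a * b = -1 ∧
      ((i,j,a,b) ∈ T ∨ (j,i,a,b) ∈ T)) :
    (i,j,1,-1) ∈ T ∨ (i,j,-1,1) ∈ T ∨ (j,i,1,-1) ∈ T ∨ (j,i,-1,1) ∈ T := by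
  obtain ⟨a, b, ha, hb, hab, hm⟩ := h
  rcases ha with rfl | rfl <;> rcases hb with rfl | rfl <;> norm_num at hab <;> tauto

lemma fund_helper2 {n : ℕ} (T : Set (Fin n × Fin n × ℝ × ℝ)) (i j : Fin n)
    (h : ∃ a b : ℝ, (a = 1 ∨ a = -1) ∧ (b = 1 ∨ b = -1) ∧ a * b = 1 ∧
      ((i,j,a,b) ∈ T ∨ (j,i,a,b) ∈ T)) :
    (i,j,1,1) ∈ T ∨ (i,j,-1,-1) ∈ T ∨ (j,i,1,1) ∈ T ∨ (j,i,-1,-1) ∈ T := by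
  obtain ⟨a, b, ha, hb, hab, hm⟩ := h
  rcases ha with rfl | rfl <;> rcases hb with rfl | rfl <;> norm_num at hab <;> tauto

end SP
namespace SP

lemma kcal_to_cp {n : ℕ} {K : Set (E n)} (hK : K ∈ Kcal n) :
    ∃ p T, ValidCP n p T ∧ K = CP n p T := by
  classical
  obtain ⟨c, e, hface, hKo⟩ := hK
  obtain ⟨J, hJcases, -, hcard, hceq⟩ := hface
  have hJ3 : ∀ i : Fin n, J i = Set.Icc (-1:ℝ) 1 ∨ J i = {-1} ∨ J i = {1} :=
    fun i => hJcases i i.isLt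
  set p : Fin n → Option ℝ := fun i =>
    if J i = Set.Icc (-1:ℝ) 1 then none else if J i = ({1} : Set ℝ) then some 1 else some (-1)
    with hp
  have hIccne1 : Set.Icc (-1:ℝ) 1 ≠ ({1} : Set ℝ) := by
    intro h
    have h0 : (0:ℝ) ∈ Set.Icc (-1:ℝ) 1 := by norm_num
    rw [h] at h0
    norm_num at h0
  have hIccne2 : Set.Icc (-1:ℝ) 1 ≠ ({-1} : Set ℝ) := by
    intro h
    have h0 : (0:ℝ) ∈ Set.Icc (-1:ℝ) 1 := by norm_num
    rw [h] at h0
    norm_num at h0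
  have h1ne2 : ({-1} : Set ℝ) ≠ ({1} : Set ℝ) := by
    intro h
    have h0 : (-1:ℝ) ∈ ({-1} : Set ℝ) := rfl
    rw [h] at h0
    norm_num at h0
  have hpcompute : ∀ i : Fin n,
      (J i = Set.Icc (-1:ℝ) 1 → p i = none) ∧
      (J i = ({1} : Set ℝ) → p i = some 1) ∧
      (J i = ({-1} : Set ℝ) → p i = some (-1)) := by
    intro i
    refine ⟨fun h => ?_, fun h => ?_, fun h => ?_⟩
    · show (if J i = Set.Icc (-1:ℝ) 1 then none else _) = none
      rw [if_pos h]
    · show (if J i = Set.Icc (-1:ℝ) 1 then none else if J i = ({1}:Set ℝ) then some 1 else some (-1)) = some 1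
      rw [h, if_neg (Ne.symm hIccne1), if_pos rfl]
    · show (if J i = Set.Icc (-1:ℝ) 1 then none else if J i = ({1}:Set ℝ) then some 1 else some (-1)) = some (-1)
      rw [h, if_neg (Ne.symm hIccne2), if_neg h1ne2]
  have hvals : ∀ i, p i = none ∨ p i = some 1 ∨ p i = some (-1) := by
    intro i
    rcases hJ3 i with h | h | h
    · exact Or.inl ((hpcompute i).1 h)
    · exact Or.inr (Or.inr ((hpcompute i).2.2 h))
    · exact Or.inr (Or.inl ((hpcompute i).2.1 h))
  have hpnone : ∀ i, (p i = none ↔ J i = Set.Icc (-1:ℝ) 1) := by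
    intro i
    constructor
    · intro h
      rcases hJ3 i with hc1 | hc1 | hc1
      · exact hc1
      · rw [(hpcompute i).2.2 hc1] at h; cases h
      · rw [(hpcompute i).2.1 hc1] at h; cases h
    · exact (hpcompute i).1
  have hpsome : ∀ i t, p i = some t → (J i = ({t} : Set ℝ) ∧ (t = 1 ∨ t = -1)) := by
    intro i t h
    rcases hJ3 i with hc1 | hc1 | hc1
    · rw [(hpcompute i).1 hc1] at h; cases h
    · rw [(hpcompute i).2.2 hc1] at h
      have := Option.some_injective ℝ h
      rw [← this]; exact ⟨hc1, Or.inr rfl⟩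
    · rw [(hpcompute i).2.1 hc1] at h
      have := Option.some_injective ℝ h
      rw [← this]; exact ⟨hc1, Or.inl rfl⟩
  have hcmem : ∀ x : E n, x ∈ c ↔
      ((∀ i, p i = none → x i ∈ Set.Icc (-1:ℝ) 1) ∧ (∀ i t, p i = some t → x i = t)) := by
    intro x
    rw [hceq]
    constructor
    · intro hx
      constructor
      · intro i hi
        have h2 := (hpnone i).1 hi
        have := hx i
        rwa [h2] at this
      · intro i t ht
        have h2 := (hpsome i t ht).1
        have := hx i
        rwa [h2] at this
    · rintro ⟨h1, h2⟩ i
      rcases hJ3 i with hc1 | hc1 | hc1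
      · rw [hc1]; exact h1 i ((hpnone i).2 hc1)
      · rw [hc1]; exact h2 i (-1) ((hpcompute i).2.2 hc1)
      · rw [hc1]; exact h2 i 1 ((hpcompute i).2.1 hc1)
  have hcsub : c ⊆ Icube n := by
    intro x hx
    rw [mem_Icube]
    intro i
    rcases hvals i with h | h | h
    · exact Set.mem_Icc.1 (((hcmem x).1 hx).1 i h)
    · have := ((hcmem x).1 hx).2 i 1 h; rw [this]; norm_num
    · have := ((hcmem x).1 hx).2 i (-1) h; rw [this]; norm_num
  set Fr : Finset (Fin n) := Finset.univ.filter (fun i => p i = none) with hFr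
  have hmemFr : ∀ i, i ∈ Fr ↔ p i = none := by intro i; simp [hFr]
  have hFrcard : Fr.card = e := by
    have hset : {i : Fin n | J i = Set.Icc (-1:ℝ) 1} = (↑Fr : Set (Fin n)) := by
      ext i
      simp only [Set.mem_setOf_eq, Finset.mem_coe]
      constructor
      · intro h; exact (hmemFr i).2 ((hpnone i).2 h)
      · intro h; exact (hpnone i).1 ((hmemFr i).1 h)
    rw [← hcard, hset, Set.ncard_coe_finset]
  have hen : e ≤ n := by
    rw [← hFrcard]
    simpa using Fr.card_le_univ
  rcases hKo with ⟨he0, hKc⟩ | ⟨he1, L, hconf, himg, H, hHKo, hKL⟩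
  -- degenerate case : vertex
  · have hnofree : ∀ i, p i ≠ none := by
      intro i hi
      have h1 : i ∈ Fr := (hmemFr i).2 hi
      have h2 : Fr = ∅ := Finset.card_eq_zero.1 (by rw [hFrcard, he0])
      rw [h2] at h1
      exact absurd h1 (Finset.notMem_empty i)
    refine ⟨p, ∅, ⟨hvals, fun t ht => absurd ht (Set.notMem_empty t), ?_⟩, ?_⟩
    · intro i j hi _
      exact absurd hi (hnofree i)
    · rw [hKc]
      apply Set.Subset.antisymm
      · intro x hx
        refine ⟨hcsub hx, fun i t ht => ((hcmem x).1 hx).2 i t ht,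
          fun t ht => absurd ht (Set.notMem_empty t)⟩
      · intro x hx
        rw [hcmem]
        exact ⟨fun i hi => absurd hi (hnofree i), fun i t ht => hx.2.1 i t ht⟩
  -- main case
  · obtain ⟨lam, U, v, hlam, hLdef⟩ := hconf
    obtain ⟨S, hfundS, hHS⟩ := hHKo
    rw [hHS] at hKL
    clear hHS
    -- pinned values
    set s : Fin n → ℝ := fun i => (p i).getD 0 with hs
    have hpin : ∀ i, p i ≠ none → p i = some (s i) ∧ (s i = 1 ∨ s i = -1) := by
      intro i hi
      rcases hvals i with h | h | h
      · exact absurd h hi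
      · simp [hs, h]
      · simp [hs, h]
    -- coefficients
    set w : Fin n → Fin n → ℝ := fun i k => (U (EuclideanSpace.single k (1:ℝ))) i with hw
    have hUco : ∀ (y : E n) (i : Fin n), U y i = ∑ k, w i k * y k := fun y i => iso_coord U y i
    have hUsym : ∀ (z : E n) (k : Fin n), U.symm z k = ∑ i, w i k * z i := by
      intro z k
      rw [iso_coord U.symm z k]
      apply Finset.sum_congr rfl
      intro j _
      rw [iso_transpose U j k]
    have hLap : ∀ (x : E n) (i : Fin n), L x i = lam * (∑ k, w i k * x k) + v i := by
      intro x i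
      rw [hLdef x]
      rw [PiLp.add_apply, PiLp.smul_apply, smul_eq_mul, hUco]
    -- the free test points
    set chi : (Fin n → ℝ) → E n := fun t => (WithLp.toLp 2 (fun j => if p j = none then t j else s j) : E n)
      with hchi
    have hchi_free : ∀ (t : Fin n → ℝ) j, p j = none → chi t j = t j := by
      intro t j hj
      show (if p j = none then t j else s j) = t j
      rw [if_pos hj]
    have hchi_pin : ∀ (t : Fin n → ℝ) j, p j ≠ none → chi t j = s j := by
      intro t j hj
      show (if p j = none then t j else s j) = s j
      rw [if_neg hj]
    have hchic : ∀ t : Fin n → ℝ, (∀ j, p j = none → |t j| ≤ 1) → chi t ∈ c := by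
      intro t ht
      rw [hcmem]
      constructor
      · intro j hj
        rw [hchi_free t j hj]
        exact Set.mem_Icc.2 (abs_le.1 (ht j hj))
      · intro j t' hj
        have hjne : p j ≠ none := by rw [hj]; exact Option.some_ne_none _
        rw [hchi_pin t j hjne]
        have := (hpin j hjne).1
        rw [this] at hj
        exact Option.some_injective ℝ hj
    -- row decomposition over c
    set Dr : Fin n → ℝ := fun i =>
      lam * (∑ k ∈ Finset.univ.filter (fun k => ¬ p k = none), w i k * s k) + v i with hDr
    have hLc : ∀ x ∈ c, ∀ i, L x i = (∑ k ∈ Fr, (lam * w i k) * x k) + Dr i := by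
      intro x hx i
      rw [hLap]
      have hsplit : (∑ k, w i k * x k) = (∑ k ∈ Fr, w i k * x k) +
          ∑ k ∈ Finset.univ.filter (fun k => ¬ p k = none), w i k * x k := by
        rw [hFr]
        exact (Finset.sum_filter_add_sum_filter_not Finset.univ _ _).symm
      have h2 : ∑ k ∈ Finset.univ.filter (fun k => ¬ p k = none), w i k * x k
          = ∑ k ∈ Finset.univ.filter (fun k => ¬ p k = none), w i k * s k := by
        apply Finset.sum_congr rfl
        intro k hk
        have hkp : ¬ p k = none := (Finset.mem_filter.1 hk).2
        have := ((hcmem x).1 hx).2 k (s k) (hpin k hkp).1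
        rw [this]
      have hA : lam * (∑ k ∈ Fr, w i k * x k) = ∑ k ∈ Fr, (lam * w i k) * x k := by
        rw [Finset.mul_sum]
        apply Finset.sum_congr rfl
        intro k _
        ring
      rw [hsplit, h2, mul_add, hA, hDr]
      ring
    -- zero rows
    have hzero : ∀ i : Fin n, e ≤ (i:ℕ) → ∀ x ∈ c, L x i = 0 := by
      intro i hi x hx
      have : L x ∈ IcubeD n e := by rw [← himg]; exact ⟨x, hx, rfl⟩
      exact this.2 i hi
    have hWzero : ∀ i : Fin n, e ≤ (i:ℕ) → ∀ k ∈ Fr, w i k = 0 := by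
      intro i hi k hk
      have hkfree : p k = none := (hmemFr k).1 hk
      have h0 : chi (fun _ => 0) ∈ c := hchic _ (fun j _ => by norm_num)
      have h1 : chi (fun j => if j = k then 1 else 0) ∈ c := by
        apply hchic
        intro j _
        split <;> norm_num
      have e0 := hLc _ h0 i
      have e1 := hLc _ h1 i
      rw [hzero i hi _ h0] at e0
      rw [hzero i hi _ h1] at e1
      have hsum0 : ∑ k' ∈ Fr, (lam * w i k') * (chi (fun _ => 0) k') = 0 := by
        apply Finset.sum_eq_zero
        intro k' hk'
        have hcv : chi (fun _ => (0:ℝ)) k' = 0 := by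
          simpa using hchi_free (fun _ => (0:ℝ)) k' ((hmemFr k').1 hk')
        rw [hcv]
        ring
      have hsum1 : ∑ k' ∈ Fr, (lam * w i k') * (chi (fun j => if j = k then 1 else 0) k')
          = lam * w i k := by
        rw [Finset.sum_eq_single k]
        · have hcv : chi (fun j => if j = k then (1:ℝ) else 0) k = 1 := by
            simpa using hchi_free (fun j => if j = k then (1:ℝ) else 0) k hkfree
          rw [hcv]
          ring
        · intro k' hk' hne
          have hcv : chi (fun j => if j = k then (1:ℝ) else 0) k' = 0 := by
            simpa [hne] using hchi_free (fun j => if j = k then (1:ℝ) else 0) k'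
              ((hmemFr k').1 hk')
          rw [hcv]
          ring
        · intro hnk
          exact absurd hk hnk
      rw [hsum0] at e0
      rw [hsum1] at e1
      have : lam * w i k = 0 := by linarith
      rcases mul_eq_zero.1 this with h | h
      · exact absurd h (ne_of_gt hlam)
      · exact h
    -- rows are unit ℓ¹
    have hbd1 : ∀ x ∈ c, ∀ i : Fin n, (i:ℕ) < e → |L x i| ≤ 1 := by
      intro x hx i hi
      have : L x ∈ IcubeD n e := by rw [← himg]; exact ⟨x, hx, rfl⟩
      have h2 := this.1 i hi
      rw [Set.mem_Icc] at h2
      exact abs_le.2 h2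
    have hrow : ∀ i : Fin n, (i:ℕ) < e → ((∑ k ∈ Fr, |lam * w i k|) = 1 ∧ Dr i = 0) := by
      intro i hi
      apply row_abs Fr (fun k => lam * w i k) (Dr i)
      · intro t ht
        have htc : chi t ∈ c := hchic t (fun j hj => ht j ((hmemFr j).2 hj))
        have hsum : ∑ k ∈ Fr, (lam * w i k) * t k
            = ∑ k ∈ Fr, (lam * w i k) * (chi t k) := by
          apply Finset.sum_congr rfl
          intro k hk
          have hcv := hchi_free t k ((hmemFr k).1 hk)
          rw [hcv]
        rw [hsum, ← hLc _ htc i]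
        exact hbd1 _ htc i hi
      · -- attains 1
        have hz : (WithLp.toLp 2 (fun j => if j = i then (1:ℝ) else 0) : E n) ∈ IcubeD n e := by
          constructor
          · intro j _
            show (if j = i then (1:ℝ) else 0) ∈ Set.Icc (-1:ℝ) 1
            split <;> norm_num
          · intro j hj
            show (if j = i then (1:ℝ) else 0) = 0
            rw [if_neg]
            intro hji
            rw [hji] at hj
            omega
        rw [← himg] at hz
        obtain ⟨x, hxc, hxz⟩ := hz
        refine ⟨fun k => x k, ?_, ?_⟩
        · intro k hk
          exact abs_le.2 (Set.mem_Icc.1 (((hcmem x).1 hxc).1 k ((hmemFr k).1 hk)))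
        · rw [← hLc x hxc i, hxz]
          simp
      · -- attains -1
        have hz : (WithLp.toLp 2 (fun j => if j = i then (-1:ℝ) else 0) : E n) ∈ IcubeD n e := by
          constructor
          · intro j _
            show (if j = i then (-1:ℝ) else 0) ∈ Set.Icc (-1:ℝ) 1
            split <;> norm_num
          · intro j hj
            show (if j = i then (-1:ℝ) else 0) = 0
            rw [if_neg]
            intro hji
            rw [hji] at hj
            omega
        rw [← himg] at hz
        obtain ⟨x, hxc, hxz⟩ := hz
        refine ⟨fun k => x k, ?_, ?_⟩
        · intro k hk
          exact abs_le.2 (Set.mem_Icc.1 (((hcmem x).1 hxc).1 k ((hmemFr k).1 hk)))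
        · rw [← hLc x hxc i, hxz]
          simp
    -- the inverse map
    set M : E n → E n := fun z => lam⁻¹ • (U.symm (z - v)) with hM
    have hML : ∀ x, M (L x) = x := by
      intro x
      show lam⁻¹ • (U.symm (L x - v)) = x
      rw [hLdef x, add_sub_cancel_right, map_smul, U.symm_apply_apply, smul_smul,
        inv_mul_cancel₀ (ne_of_gt hlam), one_smul]
    have himgM : M '' (IcubeD n e) = c := by
      apply Set.Subset.antisymm
      · rintro y ⟨z, hz, rfl⟩
        rw [← himg] at hz
        obtain ⟨x, hx, rfl⟩ := hz
        rwa [hML]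
      · intro y hy
        refine ⟨L y, ?_, hML y⟩
        rw [← himg]
        exact ⟨y, hy, rfl⟩
    set Ae : Finset (Fin n) := Finset.univ.filter (fun i : Fin n => (i:ℕ) < e) with hAe
    have hmemAe : ∀ i : Fin n, i ∈ Ae ↔ (i:ℕ) < e := by intro i; simp [hAe]
    have hAecard : Ae.card = e := card_filter_lt n e hen
    set Dc : Fin n → ℝ := fun k => -(lam⁻¹ * (∑ j, w j k * v j)) with hDc
    have hMz : ∀ z ∈ IcubeD n e, ∀ k : Fin n,
        M z k = (∑ j ∈ Ae, (lam⁻¹ * w j k) * z j) + Dc k := by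
      intro z hz k
      show (lam⁻¹ • (U.symm (z - v))) k = _
      rw [PiLp.smul_apply, smul_eq_mul, hUsym]
      have hsub : ∀ j, (z - v) j = z j - v j := fun j => rfl
      have h1 : (∑ j, w j k * (z - v) j) = (∑ j, w j k * z j) - ∑ j, w j k * v j := by
        rw [← Finset.sum_sub_distrib]
        apply Finset.sum_congr rfl
        intro j _
        rw [hsub j]
        ring
      rw [h1]
      have hsplit : (∑ j, w j k * z j) = (∑ j ∈ Ae, w j k * z j) +
          ∑ j ∈ Finset.univ.filter (fun j : Fin n => ¬ (j:ℕ) < e), w j k * z j := by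
        rw [hAe]
        exact (Finset.sum_filter_add_sum_filter_not Finset.univ _ _).symm
      have hz2 : ∑ j ∈ Finset.univ.filter (fun j : Fin n => ¬ (j:ℕ) < e), w j k * z j = 0 := by
        apply Finset.sum_eq_zero
        intro j hj
        have : z j = 0 := hz.2 j (not_lt.1 (Finset.mem_filter.1 hj).2)
        rw [this]; ring
      rw [hsplit, hz2, add_zero]
      have hA : lam⁻¹ * (∑ j ∈ Ae, w j k * z j) = ∑ j ∈ Ae, (lam⁻¹ * w j k) * z j := by
        rw [Finset.mul_sum]
        apply Finset.sum_congr rfl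
        intro j _
        ring
      rw [mul_sub, hA, hDc]
      ring
    -- columns are unit ℓ¹
    have hcol : ∀ k : Fin n, p k = none → ((∑ j ∈ Ae, |lam⁻¹ * w j k|) = 1 ∧ Dc k = 0) := by
      intro k hkfree
      apply row_abs Ae (fun j => lam⁻¹ * w j k) (Dc k)
      · intro t ht
        set z : E n := (WithLp.toLp 2 (fun j => if (j:ℕ) < e then t j else 0) : E n) with hzdef
        have hzI : z ∈ IcubeD n e := by
          constructor
          · intro j hj
            show (if (j:ℕ) < e then t j else 0) ∈ Set.Icc (-1:ℝ) 1
            rw [if_pos hj]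
            exact Set.mem_Icc.2 (abs_le.1 (ht j ((hmemAe j).2 hj)))
          · intro j hj
            show (if (j:ℕ) < e then t j else 0) = 0
            rw [if_neg (not_lt.2 hj)]
        have hMc : M z ∈ c := by rw [← himgM]; exact ⟨z, hzI, rfl⟩
        have hbd := abs_le.2 (Set.mem_Icc.1 (((hcmem (M z)).1 hMc).1 k hkfree))
        have hsum : ∑ j ∈ Ae, (lam⁻¹ * w j k) * t j = ∑ j ∈ Ae, (lam⁻¹ * w j k) * z j := by
          apply Finset.sum_congr rfl
          intro j hj
          have : z j = t j := by
            show (if (j:ℕ) < e then t j else 0) = t j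
            rw [if_pos ((hmemAe j).1 hj)]
          rw [this]
        rw [hsum, ← hMz z hzI k]
        exact hbd
      · -- attains 1
        have hxc : chi (fun j => if j = k then 1 else 0) ∈ c := by
          apply hchic
          intro j _
          split <;> norm_num
        have hLxI : L (chi (fun j => if j = k then 1 else 0)) ∈ IcubeD n e := by
          rw [← himg]; exact ⟨_, hxc, rfl⟩
        refine ⟨fun j => L (chi (fun j' => if j' = k then 1 else 0)) j, ?_, ?_⟩
        · intro j hj
          exact abs_le.2 (Set.mem_Icc.1 (hLxI.1 j ((hmemAe j).1 hj)))
        · rw [← hMz _ hLxI k, hML]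
          have hcv : chi (fun j' => if j' = k then (1:ℝ) else 0) k = 1 := by
            simpa using hchi_free (fun j' => if j' = k then (1:ℝ) else 0) k hkfree
          exact hcv
      · -- attains -1
        have hxc : chi (fun j => if j = k then -1 else 0) ∈ c := by
          apply hchic
          intro j _
          split <;> norm_num
        have hLxI : L (chi (fun j => if j = k then -1 else 0)) ∈ IcubeD n e := by
          rw [← himg]; exact ⟨_, hxc, rfl⟩
        refine ⟨fun j => L (chi (fun j' => if j' = k then -1 else 0)) j, ?_, ?_⟩
        · intro j hj
          exact abs_le.2 (Set.mem_Icc.1 (hLxI.1 j ((hmemAe j).1 hj)))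
        · rw [← hMz _ hLxI k, hML]
          have hcv : chi (fun j' => if j' = k then (-1:ℝ) else 0) k = -1 := by
            simpa using hchi_free (fun j' => if j' = k then (-1:ℝ) else 0) k hkfree
          exact hcv
    -- lam = 1
    have hepos : (0:ℝ) < (e:ℝ) := by exact_mod_cast he1
    have htot1 : lam * (∑ i ∈ Ae, ∑ k ∈ Fr, |w i k|) = (e:ℝ) := by
      have h1 : ∀ i ∈ Ae, ∑ k ∈ Fr, |lam * w i k| = 1 := by
        intro i hi
        exact (hrow i ((hmemAe i).1 hi)).1
      have h2 : ∑ i ∈ Ae, ∑ k ∈ Fr, |lam * w i k| = (e:ℝ) := by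
        rw [Finset.sum_congr rfl h1]
        rw [Finset.sum_const, hAecard]
        simp
      rw [← h2, Finset.mul_sum]
      apply Finset.sum_congr rfl
      intro i _
      rw [Finset.mul_sum]
      apply Finset.sum_congr rfl
      intro k _
      rw [abs_mul, abs_of_pos hlam]
    have htot2 : lam⁻¹ * (∑ i ∈ Ae, ∑ k ∈ Fr, |w i k|) = (e:ℝ) := by
      have h1 : ∀ k ∈ Fr, ∑ i ∈ Ae, |lam⁻¹ * w i k| = 1 := by
        intro k hk
        exact (hcol k ((hmemFr k).1 hk)).1
      have h2 : ∑ k ∈ Fr, ∑ i ∈ Ae, |lam⁻¹ * w i k| = (e:ℝ) := by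
        rw [Finset.sum_congr rfl h1]
        rw [Finset.sum_const, hFrcard]
        simp
      rw [← h2, Finset.sum_comm, Finset.mul_sum]
      apply Finset.sum_congr rfl
      intro k _
      rw [Finset.mul_sum]
      apply Finset.sum_congr rfl
      intro i _
      rw [abs_mul, abs_of_pos (inv_pos.2 hlam)]
    have hlam1 : lam = 1 := by
      set SW := ∑ i ∈ Ae, ∑ k ∈ Fr, |w i k| with hSW
      have h3 : lam * SW = lam⁻¹ * SW := by rw [htot1, htot2]
      have hSWpos : 0 < SW := by
        rcases lt_or_ge 0 SW with h | h
        · exact h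
        · exfalso; nlinarith
      have h5 : lam = lam⁻¹ := mul_right_cancel₀ (ne_of_gt hSWpos) h3
      have h6 : lam * lam = 1 := by
        nth_rewrite 2 [h5]
        exact mul_inv_cancel₀ (ne_of_gt hlam)
      have h7 : (lam - 1) * (lam + 1) = 0 := by linear_combination h6
      rcases mul_eq_zero.1 h7 with h | h
      · linarith
      · linarith
    -- normalized rows/cols
    have hrow1 : ∀ i : Fin n, (i:ℕ) < e → (∑ k ∈ Fr, |w i k|) = 1 := by
      intro i hi
      have hh := (hrow i hi).1
      rw [← hh]
      apply Finset.sum_congr rfl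
      intro k _
      rw [hlam1, one_mul]
    have hcol1 : ∀ k : Fin n, p k = none → (∑ j ∈ Ae, |w j k|) = 1 := by
      intro k hk
      have hh := (hcol k hk).1
      rw [← hh]
      apply Finset.sum_congr rfl
      intro j _
      rw [hlam1]
      norm_num
    have hcol2 : ∀ k : Fin n, p k = none → (∑ j ∈ Ae, (w j k)^2) = 1 := by
      intro k hk
      have htotal : (∑ i, w i k * w i k) = 1 := iso_col_norm U k
      have hsplit : (∑ i, w i k * w i k) = (∑ i ∈ Ae, w i k * w i k) +
          ∑ i ∈ Finset.univ.filter (fun i : Fin n => ¬ (i:ℕ) < e), w i k * w i k := by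
        rw [hAe]
        exact (Finset.sum_filter_add_sum_filter_not Finset.univ _ _).symm
      have hz2 : ∑ i ∈ Finset.univ.filter (fun i : Fin n => ¬ (i:ℕ) < e),
          w i k * w i k = 0 := by
        apply Finset.sum_eq_zero
        intro i hi
        have h0 : w i k = 0 := hWzero i (not_lt.1 (Finset.mem_filter.1 hi).2) k ((hmemFr k).2 hk)
        rw [h0]; ring
      rw [hsplit, hz2, add_zero] at htotal
      rw [← htotal]
      apply Finset.sum_congr rfl
      intro j _
      ring
    have hdich : ∀ k : Fin n, p k = none → ∀ j ∈ Ae, w j k = 0 ∨ |w j k| = 1 :=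
      fun k hk => dichot01 Ae (fun j => w j k) (hcol1 k hk) (hcol2 k hk)
    -- the coordinate permutation τ
    have hτex : ∀ i : Fin n, ∃ k₀ : Fin n, ((i:ℕ) < e →
        (k₀ ∈ Fr ∧ |w i k₀| = 1 ∧ ∀ k ∈ Fr, k ≠ k₀ → w i k = 0)) := by
      intro i
      by_cases hi : (i:ℕ) < e
      · obtain ⟨k₀, hk₀F, hk₀1, hk₀0⟩ := unique_support Fr (fun k => w i k) (hrow1 i hi)
          (fun k hk => hdich k ((hmemFr k).1 hk) i ((hmemAe i).2 hi))
        exact ⟨k₀, fun _ => ⟨hk₀F, hk₀1, hk₀0⟩⟩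
      · exact ⟨i, fun h => absurd h hi⟩
    choose τ hτ using hτex
    have hLrow : ∀ x ∈ c, ∀ i : Fin n, (i:ℕ) < e → L x i = w i (τ i) * x (τ i) := by
      intro x hx i hi
      obtain ⟨hτF, hτ1, hτ0⟩ := hτ i hi
      rw [hLc x hx i, (hrow i hi).2, add_zero]
      rw [Finset.sum_eq_single (τ i)]
      · rw [hlam1]; ring
      · intro k hk hne
        rw [hτ0 k hk hne]; ring
      · intro hne; exact absurd hτF hne
    have hεpm : ∀ i : Fin n, (i:ℕ) < e → (w i (τ i) = 1 ∨ w i (τ i) = -1) :=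
      fun i hi => pm_abs (hτ i hi).2.1
    have hτFr : ∀ i ∈ Ae, τ i ∈ Fr := fun i hi => (hτ i ((hmemAe i).1 hi)).1
    have hτinj : ∀ i₁ ∈ Ae, ∀ i₂ ∈ Ae, τ i₁ = τ i₂ → i₁ = i₂ := by
      intro i₁ h₁ i₂ h₂ heq
      by_contra hne
      have hkF : τ i₁ ∈ Fr := hτFr i₁ h₁
      have hkfree : p (τ i₁) = none := (hmemFr (τ i₁)).1 hkF
      obtain ⟨j₀, hj₀A, hj₀1, hj₀0⟩ := unique_support Ae (fun j => w j (τ i₁))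
        (hcol1 (τ i₁) hkfree) (fun j hj => hdich (τ i₁) hkfree j hj)
      have h1' : w i₁ (τ i₁) ≠ 0 := by
        have hh := (hτ i₁ ((hmemAe i₁).1 h₁)).2.1
        intro hz; rw [hz] at hh; norm_num at hh
      have h2' : w i₂ (τ i₁) ≠ 0 := by
        have hh := (hτ i₂ ((hmemAe i₂).1 h₂)).2.1
        rw [← heq] at hh
        intro hz; rw [hz] at hh; norm_num at hh
      have e1 : i₁ = j₀ := by
        by_contra hc; exact h1' (hj₀0 i₁ h₁ hc)
      have e2 : i₂ = j₀ := by
        by_contra hc; exact h2' (hj₀0 i₂ h₂ hc)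
      exact hne (e1.trans e2.symm)
    have hτsurj : ∀ k ∈ Fr, ∃ i ∈ Ae, τ i = k := by
      have himg2 : Finset.image τ Ae = Fr := by
        apply Finset.eq_of_subset_of_card_le
        · intro k hk
          obtain ⟨i, hi, rfl⟩ := Finset.mem_image.1 hk
          exact hτFr i hi
        · rw [Finset.card_image_of_injOn (fun i₁ h₁ i₂ h₂ heq => hτinj i₁ h₁ i₂ h₂ heq),
            hAecard, hFrcard]
      intro k hk
      rw [← himg2] at hk
      obtain ⟨i, hi, hik⟩ := Finset.mem_image.1 hk
      exact ⟨i, hi, hik⟩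
    -- the tuple set
    set T : Set (Fin n × Fin n × ℝ × ℝ) := {t | ∃ i' j' : Fin n, ∃ a b : ℝ,
      (i':ℕ) < e ∧ (j':ℕ) < e ∧ (a = 1 ∨ a = -1) ∧ (b = 1 ∨ b = -1) ∧
      HsetD n e i' j' a b ∈ S ∧
      t = (τ i', τ j', a * w i' (τ i'), b * w j' (τ j'))} with hT
    have hτfree : ∀ i' : Fin n, (i':ℕ) < e → p (τ i') = none :=
      fun i' hi' => (hmemFr (τ i')).1 (hτ i' hi').1
    have htuples : ∀ t ∈ T, p t.1 = none ∧ p t.2.1 = none ∧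
        (t.2.2.1 = 1 ∨ t.2.2.1 = -1) ∧ (t.2.2.2 = 1 ∨ t.2.2.2 = -1) := by
      rintro t ⟨i', j', a, b, hi', hj', ha, hb, hmem, rfl⟩
      exact ⟨hτfree i' hi', hτfree j' hj', pm_mul ha (hεpm i' hi'), pm_mul hb (hεpm j' hj')⟩
    have hfundT : ∀ i j : Fin n, p i = none → p j = none →
        ((i,j,1,-1) ∈ T ∨ (i,j,-1,1) ∈ T ∨ (j,i,1,-1) ∈ T ∨ (j,i,-1,1) ∈ T) ∧
        ((i,j,1,1) ∈ T ∨ (i,j,-1,-1) ∈ T ∨ (j,i,1,1) ∈ T ∨ (j,i,-1,-1) ∈ T) := by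
      intro i j hpi hpj
      obtain ⟨i', hi'A, hτi⟩ := hτsurj i ((hmemFr i).2 hpi)
      obtain ⟨j', hj'A, hτj⟩ := hτsurj j ((hmemFr j).2 hpj)
      have hi'e : (i':ℕ) < e := (hmemAe i').1 hi'A
      have hj'e : (j':ℕ) < e := (hmemAe j').1 hj'A
      have hεi := hεpm i' hi'e
      have hεj := hεpm j' hj'e
      have hmk : ∀ a b : ℝ, (a = 1 ∨ a = -1) → (b = 1 ∨ b = -1) →
          HsetD n e i' j' a b ∈ S →
          (i, j, a * w i' (τ i'), b * w j' (τ j')) ∈ T := by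
        intro a b ha hb hmem
        rw [← hτi, ← hτj]
        exact ⟨i', j', a, b, hi'e, hj'e, ha, hb, hmem, rfl⟩
      have hmk' : ∀ a b : ℝ, (a = 1 ∨ a = -1) → (b = 1 ∨ b = -1) →
          HsetD n e j' i' a b ∈ S →
          (j, i, a * w j' (τ j'), b * w i' (τ i')) ∈ T := by
        intro a b ha hb hmem
        rw [← hτi, ← hτj]
        exact ⟨j', i', a, b, hj'e, hi'e, ha, hb, hmem, rfl⟩
      have hprod := pm_mul hεi hεj
      rcases le_total i' j' with hle | hle
      · obtain ⟨clA, clB⟩ := hfundS.2 i' j' hi'e hj'e hle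
        constructor
        · apply fund_helper1
          rcases hprod with hp1 | hp1
          · rcases clA with hm | hm
            · exact ⟨1 * w i' (τ i'), (-1) * w j' (τ j'),
                pm_mul (Or.inl rfl) hεi, pm_mul (Or.inr rfl) hεj,
                by linear_combination -hp1,
                Or.inl (hmk 1 (-1) (Or.inl rfl) (Or.inr rfl) hm)⟩
            · exact ⟨(-1) * w i' (τ i'), 1 * w j' (τ j'),
                pm_mul (Or.inr rfl) hεi, pm_mul (Or.inl rfl) hεj,
                by linear_combination -hp1,
                Or.inl (hmk (-1) 1 (Or.inr rfl) (Or.inl rfl) hm)⟩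
          · rcases clB with hm | hm
            · exact ⟨1 * w i' (τ i'), 1 * w j' (τ j'),
                pm_mul (Or.inl rfl) hεi, pm_mul (Or.inl rfl) hεj,
                by linear_combination hp1,
                Or.inl (hmk 1 1 (Or.inl rfl) (Or.inl rfl) hm)⟩
            · exact ⟨(-1) * w i' (τ i'), (-1) * w j' (τ j'),
                pm_mul (Or.inr rfl) hεi, pm_mul (Or.inr rfl) hεj,
                by linear_combination hp1,
                Or.inl (hmk (-1) (-1) (Or.inr rfl) (Or.inr rfl) hm)⟩
        · apply fund_helper2
          rcases hprod with hp1 | hp1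
          · rcases clB with hm | hm
            · exact ⟨1 * w i' (τ i'), 1 * w j' (τ j'),
                pm_mul (Or.inl rfl) hεi, pm_mul (Or.inl rfl) hεj,
                by linear_combination hp1,
                Or.inl (hmk 1 1 (Or.inl rfl) (Or.inl rfl) hm)⟩
            · exact ⟨(-1) * w i' (τ i'), (-1) * w j' (τ j'),
                pm_mul (Or.inr rfl) hεi, pm_mul (Or.inr rfl) hεj,
                by linear_combination hp1,
                Or.inl (hmk (-1) (-1) (Or.inr rfl) (Or.inr rfl) hm)⟩
          · rcases clA with hm | hm
            · exact ⟨1 * w i' (τ i'), (-1) * w j' (τ j'),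
                pm_mul (Or.inl rfl) hεi, pm_mul (Or.inr rfl) hεj,
                by linear_combination -hp1,
                Or.inl (hmk 1 (-1) (Or.inl rfl) (Or.inr rfl) hm)⟩
            · exact ⟨(-1) * w i' (τ i'), 1 * w j' (τ j'),
                pm_mul (Or.inr rfl) hεi, pm_mul (Or.inl rfl) hεj,
                by linear_combination -hp1,
                Or.inl (hmk (-1) 1 (Or.inr rfl) (Or.inl rfl) hm)⟩
      · obtain ⟨clA, clB⟩ := hfundS.2 j' i' hj'e hi'e hle
        constructor
        · apply fund_helper1
          rcases hprod with hp1 | hp1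
          · rcases clA with hm | hm
            · exact ⟨1 * w j' (τ j'), (-1) * w i' (τ i'),
                pm_mul (Or.inl rfl) hεj, pm_mul (Or.inr rfl) hεi,
                by linear_combination -hp1,
                Or.inr (hmk' 1 (-1) (Or.inl rfl) (Or.inr rfl) hm)⟩
            · exact ⟨(-1) * w j' (τ j'), 1 * w i' (τ i'),
                pm_mul (Or.inr rfl) hεj, pm_mul (Or.inl rfl) hεi,
                by linear_combination -hp1,
                Or.inr (hmk' (-1) 1 (Or.inr rfl) (Or.inl rfl) hm)⟩
          · rcases clB with hm | hm
            · exact ⟨1 * w j' (τ j'), 1 * w i' (τ i'),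
                pm_mul (Or.inl rfl) hεj, pm_mul (Or.inl rfl) hεi,
                by linear_combination hp1,
                Or.inr (hmk' 1 1 (Or.inl rfl) (Or.inl rfl) hm)⟩
            · exact ⟨(-1) * w j' (τ j'), (-1) * w i' (τ i'),
                pm_mul (Or.inr rfl) hεj, pm_mul (Or.inr rfl) hεi,
                by linear_combination hp1,
                Or.inr (hmk' (-1) (-1) (Or.inr rfl) (Or.inr rfl) hm)⟩
        · apply fund_helper2
          rcases hprod with hp1 | hp1
          · rcases clB with hm | hm
            · exact ⟨1 * w j' (τ j'), 1 * w i' (τ i'),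
                pm_mul (Or.inl rfl) hεj, pm_mul (Or.inl rfl) hεi,
                by linear_combination hp1,
                Or.inr (hmk' 1 1 (Or.inl rfl) (Or.inl rfl) hm)⟩
            · exact ⟨(-1) * w j' (τ j'), (-1) * w i' (τ i'),
                pm_mul (Or.inr rfl) hεj, pm_mul (Or.inr rfl) hεi,
                by linear_combination hp1,
                Or.inr (hmk' (-1) (-1) (Or.inr rfl) (Or.inr rfl) hm)⟩
          · rcases clA with hm | hm
            · exact ⟨1 * w j' (τ j'), (-1) * w i' (τ i'),
                pm_mul (Or.inl rfl) hεj, pm_mul (Or.inr rfl) hεi,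
                by linear_combination -hp1,
                Or.inr (hmk' 1 (-1) (Or.inl rfl) (Or.inr rfl) hm)⟩
            · exact ⟨(-1) * w j' (τ j'), 1 * w i' (τ i'),
                pm_mul (Or.inr rfl) hεj, pm_mul (Or.inl rfl) hεi,
                by linear_combination -hp1,
                Or.inr (hmk' (-1) 1 (Or.inr rfl) (Or.inl rfl) hm)⟩
    -- the set equality
    have hLinj : ∀ x y : E n, L x = L y → x = y := by
      intro x y hxy
      have hh := congrArg M hxy
      rw [hML, hML] at hh
      exact hh
    have hexS : ∃ (i₀ j₀ : Fin n) (a₀ b₀ : ℝ), HsetD n e i₀ j₀ a₀ b₀ ∈ S := by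
      have h0 : (0:ℕ) < n := lt_of_lt_of_le he1 hen
      have hi0e : ((⟨0, h0⟩ : Fin n) : ℕ) < e := he1
      obtain ⟨cl1, _⟩ := hfundS.2 ⟨0, h0⟩ ⟨0, h0⟩ hi0e hi0e (le_refl _)
      rcases cl1 with h | h
      · exact ⟨_, _, _, _, h⟩
      · exact ⟨_, _, _, _, h⟩
    have hKCP : K = CP n p T := by
      rw [hKL]
      apply Set.Subset.antisymm
      · intro x hx
        obtain ⟨i₀, j₀, a₀, b₀, hH₀S⟩ := hexS
        have hLxI : L x ∈ IcubeD n e := (hx _ hH₀S).1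
        have hxc : x ∈ c := by
          rw [← himg] at hLxI
          obtain ⟨y, hyc, hyx⟩ := hLxI
          rwa [← hLinj y x hyx]
        refine ⟨hcsub hxc, fun i t ht => ((hcmem x).1 hxc).2 i t ht, ?_⟩
        rintro t ⟨i', j', a, b, hi', hj', ha, hb, hmem, rfl⟩
        have hineq := (hx _ hmem).2
        rw [hLrow x hxc i' hi', hLrow x hxc j' hj'] at hineq
        show (b * w j' (τ j')) * x (τ j') ≤ (a * w i' (τ i')) * x (τ i')
        ring_nf
        ring_nf at hineq
        linarith
      · intro x hx
        have hxc : x ∈ c := by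
          rw [hcmem]
          exact ⟨fun i _ => Set.mem_Icc.2 (mem_Icube.1 hx.1 i), fun i t ht => hx.2.1 i t ht⟩
        intro H₀ hH₀S
        obtain ⟨i', j', hi', hj', a, b, ha, hb, rfl⟩ := hfundS.1 hH₀S
        have htT : (τ i', τ j', a * w i' (τ i'), b * w j' (τ j')) ∈ T :=
          ⟨i', j', a, b, hi', hj', ha, hb, hH₀S, rfl⟩
        have hineq := hx.2.2 _ htT
        refine ⟨by rw [← himg]; exact ⟨x, hxc, rfl⟩, ?_⟩
        rw [hLrow x hxc i' hi', hLrow x hxc j' hj']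
        show b * (w j' (τ j') * x (τ j')) ≤ a * (w i' (τ i') * x (τ i'))
        ring_nf
        ring_nf at hineq
        linarith
    exact ⟨p, T, ⟨hvals, htuples, hfundT⟩, hKCP⟩

end SP
namespace SP

lemma habs_pm {a x : ℝ} (ha : a = 1 ∨ a = -1) : |a * x| = |x| := by
  rcases ha with rfl | rfl <;> simp

lemma Talpha_apply {n : ℕ} (l : ℕ) (hl : 1 ≤ l) (α : Fin n → ℕ) (x : E n) (i : Fin n) :
    Talpha n l α x i = l * x i - (2*(α i:ℝ)+1-(l:ℝ)) := by
  have hl0 : (l:ℝ) ≠ 0 := by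
    have : (0:ℝ) < l := by exact_mod_cast hl
    linarith
  show ((l:ℝ) • (x - xalpha n l α)) i = _
  rw [PiLp.smul_apply, PiLp.sub_apply, smul_eq_mul]
  have hxa : xalpha n l α i = (2*(α i:ℝ)+1-(l:ℝ))/(l:ℝ) := by
    show (2 * (α i : ℝ) + 1 - (l:ℝ)) / (l:ℝ) = _
    ring
  rw [hxa]
  field_simp

lemma sub_Icube {n : ℕ} (l : ℕ) (hl : 1 ≤ l) (α : Fin n → ℕ) (hα : ∀ i, α i < l)
    {x : E n} (hx : Talpha n l α x ∈ Icube n) : x ∈ Icube n := by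
  rw [mem_Icube] at hx ⊢
  intro i
  have h := hx i
  rw [Talpha_apply l hl α x i] at h
  have hl0 : (0:ℝ) < l := by exact_mod_cast hl
  have h1 : (α i : ℝ) ≤ (l:ℝ) - 1 := by
    have : (α i : ℕ) + 1 ≤ l := hα i
    have h2 : ((α i : ℕ) : ℝ) + 1 ≤ (l:ℝ) := by exact_mod_cast this
    linarith
  have h2 : (0:ℝ) ≤ (α i : ℝ) := Nat.cast_nonneg _
  constructor
  · nlinarith [h.1]
  · nlinarith [h.2]

/-- core transfer of a (±1)-constraint from the big cube to a subcube piece -/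
lemma transfer2 (l : ℕ) (hl : 1 ≤ l) (a b : ℝ) (ha : a = 1 ∨ a = -1) (hb : b = 1 ∨ b = -1)
    (ai aj : ℕ) (ui uj wi wj xi xj yi yj : ℝ)
    (hui : |ui| ≤ 1) (huj : |uj| ≤ 1) (hwi : |wi| ≤ 1) (hwj : |wj| ≤ 1)
    (hpi : |ui| = 1 → wi = ui) (hpj : |uj| = 1 → wj = uj)
    (hfree : |ui| < 1 → |uj| < 1 → b * uj ≤ a * ui → b * wj ≤ a * wi)
    (hxi : (l:ℝ) * xi = ui + (2*(ai:ℝ)+1-(l:ℝ)))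
    (hxj : (l:ℝ) * xj = uj + (2*(aj:ℝ)+1-(l:ℝ)))
    (hyi : (l:ℝ) * yi = wi + (2*(ai:ℝ)+1-(l:ℝ)))
    (hyj : (l:ℝ) * yj = wj + (2*(aj:ℝ)+1-(l:ℝ)))
    (hx : b * xj ≤ a * xi) : b * yj ≤ a * yi := by
  have hl0 : (0:ℝ) < l := by exact_mod_cast hl
  have hxu : 0 ≤ a * ui - b * uj + (a * (2*(ai:ℝ)+1-(l:ℝ)) - b * (2*(aj:ℝ)+1-(l:ℝ))) := by
    have h1 : (l:ℝ) * (b * xj) ≤ (l:ℝ) * (a * xi) :=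
      mul_le_mul_of_nonneg_left hx (le_of_lt hl0)
    have h2 : (l:ℝ) * (b * xj) = b * (uj + (2*(aj:ℝ)+1-(l:ℝ))) := by
      linear_combination b * hxj
    have h3 : (l:ℝ) * (a * xi) = a * (ui + (2*(ai:ℝ)+1-(l:ℝ))) := by
      linear_combination a * hxi
    rw [h2, h3] at h1
    nlinarith [h1]
  have hsuff : 0 ≤ a * wi - b * wj + (a * (2*(ai:ℝ)+1-(l:ℝ)) - b * (2*(aj:ℝ)+1-(l:ℝ))) →
      b * yj ≤ a * yi := by
    intro h
    have h2 : (l:ℝ) * (b * yj) = b * (wj + (2*(aj:ℝ)+1-(l:ℝ))) := by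
      linear_combination b * hyj
    have h3 : (l:ℝ) * (a * yi) = a * (wi + (2*(ai:ℝ)+1-(l:ℝ))) := by
      linear_combination a * hyi
    have h4 : (l:ℝ) * (b * yj) ≤ (l:ℝ) * (a * yi) := by
      rw [h2, h3]
      nlinarith [h]
    exact le_of_mul_le_mul_left h4 hl0
  apply hsuff
  have hA2 : ∃ z : ℤ, a * (2*(ai:ℝ)+1-(l:ℝ)) - b * (2*(aj:ℝ)+1-(l:ℝ)) = 2*(z:ℝ) := by
    rcases ha with rfl | rfl <;> rcases hb with rfl | rfl
    · exact ⟨(ai:ℤ) - (aj:ℤ), by push_cast; ring⟩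
    · exact ⟨(ai:ℤ) + (aj:ℤ) + 1 - (l:ℤ), by push_cast; ring⟩
    · exact ⟨-((ai:ℤ) + (aj:ℤ) + 1 - (l:ℤ)), by push_cast; ring⟩
    · exact ⟨(aj:ℤ) - (ai:ℤ), by push_cast; ring⟩
  obtain ⟨z, hz⟩ := hA2
  rw [hz] at hxu ⊢
  have haui : |a * ui| = |ui| := habs_pm ha
  have hbuj : |b * uj| = |uj| := habs_pm hb
  have hawi : |a * wi| = |wi| := habs_pm ha
  have hbwj : |b * wj| = |wj| := habs_pm hb
  have haui' : -1 ≤ a * ui ∧ a * ui ≤ 1 := abs_le.1 (by rw [haui]; exact hui)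
  have hbuj' : -1 ≤ b * uj ∧ b * uj ≤ 1 := abs_le.1 (by rw [hbuj]; exact huj)
  have hawi' : -1 ≤ a * wi ∧ a * wi ≤ 1 := abs_le.1 (by rw [hawi]; exact hwi)
  have hbwj' : -1 ≤ b * wj ∧ b * wj ≤ 1 := abs_le.1 (by rw [hbwj]; exact hwj)
  rcases lt_trichotomy z 0 with hzc | hzc | hzc
  · have hzle : (z:ℝ) ≤ -1 := by exact_mod_cast (by omega : z ≤ -1)
    have he1 : a * ui = 1 := by linarith [haui'.2, hbuj'.1]
    have he2 : b * uj = -1 := by linarith [haui'.2, hbuj'.1]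
    have hui1 : |ui| = 1 := by rw [← haui, he1]; norm_num
    have huj1 : |uj| = 1 := by rw [← hbuj, he2]; norm_num
    rw [hpi hui1, hpj huj1]
    linarith
  · have hz0 : (z:ℝ) = 0 := by exact_mod_cast hzc
    by_cases h1 : |ui| = 1
    · rw [hpi h1]
      rcases pm_abs (by rw [haui]; exact h1) with h2 | h2
      · linarith [hbwj'.2]
      · have h3 : b * uj = -1 := by linarith [hbuj'.1]
        have huj1 : |uj| = 1 := by rw [← hbuj, h3]; norm_num
        rw [hpj huj1]
        linarith
    · have h1' : |ui| < 1 := lt_of_le_of_ne hui h1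
      by_cases h2 : |uj| = 1
      · rw [hpj h2]
        rcases pm_abs (by rw [hbuj]; exact h2) with h3 | h3
        · exfalso
          have h4 : a * ui ≤ |ui| := by
            calc a * ui ≤ |a * ui| := le_abs_self _
            _ = |ui| := haui
          linarith
        · linarith [hawi'.1]
      · have h2' : |uj| < 1 := lt_of_le_of_ne huj h2
        have h5 := hfree h1' h2' (by linarith)
        linarith
  · have hzge : (1:ℝ) ≤ (z:ℝ) := by exact_mod_cast (by omega : 1 ≤ z)
    linarith [hawi'.1, hbwj'.2]

end SP
namespace SP

lemma side_add {n : ℕ} (l : ℕ) (hl : 1 ≤ l) (α : Fin n → ℕ)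
    {p : Fin n → Option ℝ} {T : Set (Fin n × Fin n × ℝ × ℝ)} (hv : ValidCP n p T)
    (i j : Fin n) :
    (∀ x : E n, Talpha n l α x ∈ CP n p T → 0 ≤ x i + x j) ∨
    (∀ x : E n, Talpha n l α x ∈ CP n p T → x i + x j ≤ 0) := by
  have hl0 : (0:ℝ) < l := by exact_mod_cast hl
  rcases lt_trichotomy (α i + α j + 1) l with h | h | h
  · right
    intro x hx
    have hti := Talpha_apply l hl α x i
    have htj := Talpha_apply l hl α x j
    have hbi := mem_Icube.1 hx.1 i
    have hbj := mem_Icube.1 hx.1 j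
    have hc : ((α i:ℝ) + (α j:ℝ) + 1) + 1 ≤ (l:ℝ) := by exact_mod_cast h
    nlinarith [hbi.1, hbj.1, hbi.2, hbj.2]
  · rcases cp_side_add hv i j with hs | hs
    · left
      intro x hx
      have h5 := hs _ hx
      have hti := Talpha_apply l hl α x i
      have htj := Talpha_apply l hl α x j
      have hc : ((α i:ℝ) + (α j:ℝ) + 1) = (l:ℝ) := by exact_mod_cast h
      nlinarith [h5]
    · right
      intro x hx
      have h5 := hs _ hx
      have hti := Talpha_apply l hl α x i
      have htj := Talpha_apply l hl α x j
      have hc : ((α i:ℝ) + (α j:ℝ) + 1) = (l:ℝ) := by exact_mod_cast h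
      nlinarith [h5]
  · left
    intro x hx
    have hti := Talpha_apply l hl α x i
    have htj := Talpha_apply l hl α x j
    have hbi := mem_Icube.1 hx.1 i
    have hbj := mem_Icube.1 hx.1 j
    have hc : (l:ℝ) + 1 ≤ ((α i:ℝ) + (α j:ℝ) + 1) := by exact_mod_cast h
    nlinarith [hbi.1, hbj.1, hbi.2, hbj.2]

lemma side_sub {n : ℕ} (l : ℕ) (hl : 1 ≤ l) (α : Fin n → ℕ)
    {p : Fin n → Option ℝ} {T : Set (Fin n × Fin n × ℝ × ℝ)} (hv : ValidCP n p T)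
    (i j : Fin n) :
    (∀ x : E n, Talpha n l α x ∈ CP n p T → 0 ≤ x i - x j) ∨
    (∀ x : E n, Talpha n l α x ∈ CP n p T → x i - x j ≤ 0) := by
  have hl0 : (0:ℝ) < l := by exact_mod_cast hl
  rcases lt_trichotomy (α i) (α j) with h | h | h
  · right
    intro x hx
    have hti := Talpha_apply l hl α x i
    have htj := Talpha_apply l hl α x j
    have hbi := mem_Icube.1 hx.1 i
    have hbj := mem_Icube.1 hx.1 j
    have hc : (α i:ℝ) + 1 ≤ (α j:ℝ) := by exact_mod_cast h
    nlinarith [hbi.1, hbj.1, hbi.2, hbj.2]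
  · rcases cp_side_sub hv i j with hs | hs
    · left
      intro x hx
      have h5 := hs _ hx
      have hti := Talpha_apply l hl α x i
      have htj := Talpha_apply l hl α x j
      have hc : (α i:ℝ) = (α j:ℝ) := by exact_mod_cast h
      nlinarith [h5]
    · right
      intro x hx
      have h5 := hs _ hx
      have hti := Talpha_apply l hl α x i
      have htj := Talpha_apply l hl α x j
      have hc : (α i:ℝ) = (α j:ℝ) := by exact_mod_cast h
      nlinarith [h5]
  · left
    intro x hx
    have hti := Talpha_apply l hl α x i
    have htj := Talpha_apply l hl α x j
    have hbi := mem_Icube.1 hx.1 i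
    have hbj := mem_Icube.1 hx.1 j
    have hc : (α j:ℝ) + 1 ≤ (α i:ℝ) := by exact_mod_cast h
    nlinarith [hbi.1, hbj.1, hbi.2, hbj.2]

end SP
/-- For every `l ≥ 1`, `K_{n,l}` refines `K_n`: every element of `K_{n,l}` is contained
in some element of `K_n`, and every element of `K_n` is the union of the elements of
`K_{n,l}` contained in it. -/
theorem stmt12 (n : ℕ) (hn : 1 ≤ n) (l : ℕ) (hl : 1 ≤ l) :
    (∀ K ∈ Knl n l, ∃ K' ∈ Kcal n, K ⊆ K') ∧
    (∀ K' ∈ Kcal n, K' = ⋃₀ {K | K ∈ Knl n l ∧ K ⊆ K'}) := by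
  classical
  have hl0 : (0:ℝ) < l := by exact_mod_cast hl
  have hlcast : ((l - 1 : ℕ) : ℝ) = (l:ℝ) - 1 := by
    push_cast [Nat.cast_sub hl]
    ring
  constructor
  · rintro K ⟨α, hα, H, hHK, rfl⟩
    obtain ⟨p, T, hv, rfl⟩ := SP.kcal_to_cp hHK
    set K₀ : Set (E n) := Talpha n l α ⁻¹' SP.CP n p T with hK₀
    set p' : Fin n → Option ℝ := fun i =>
      if p i = some 1 ∧ α i = l - 1 then some 1
      else if p i = some (-1) ∧ α i = 0 then some (-1) else none with hp'
    set T' : Set (Fin n × Fin n × ℝ × ℝ) := {t | p' t.1 = none ∧ p' t.2.1 = none ∧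
      (t.2.2.1 = 1 ∨ t.2.2.1 = -1) ∧ (t.2.2.2 = 1 ∨ t.2.2.2 = -1) ∧
      ∀ x ∈ K₀, t.2.2.2 * x t.2.1 ≤ t.2.2.1 * x t.1} with hT'
    have hp'cases : ∀ i, p' i = none ∨ p' i = some 1 ∨ p' i = some (-1) := by
      intro i
      show (if p i = some 1 ∧ α i = l - 1 then some 1
        else if p i = some (-1) ∧ α i = 0 then some (-1) else none) = none ∨
        (if p i = some 1 ∧ α i = l - 1 then some 1
        else if p i = some (-1) ∧ α i = 0 then some (-1) else none) = some 1 ∨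
        (if p i = some 1 ∧ α i = l - 1 then some 1
        else if p i = some (-1) ∧ α i = 0 then some (-1) else none) = some (-1)
      split_ifs <;> simp
    have hvalid' : SP.ValidCP n p' T' := by
      refine ⟨hp'cases, ?_, ?_⟩
      · rintro t ⟨h1, h2, h3, h4, _⟩
        exact ⟨h1, h2, h3, h4⟩
      · intro i j hpi hpj
        constructor
        · rcases SP.side_add l hl α hv i j with hs | hs
          · exact Or.inl ⟨hpi, hpj, Or.inl rfl, Or.inr rfl,
              fun x hx => by dsimp only; linarith [hs x hx]⟩
          · exact Or.inr (Or.inl ⟨hpi, hpj, Or.inr rfl, Or.inl rfl,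
              fun x hx => by dsimp only; linarith [hs x hx]⟩)
        · rcases SP.side_sub l hl α hv i j with hs | hs
          · exact Or.inl ⟨hpi, hpj, Or.inl rfl, Or.inl rfl,
              fun x hx => by dsimp only; linarith [hs x hx]⟩
          · exact Or.inr (Or.inl ⟨hpi, hpj, Or.inr rfl, Or.inr rfl,
              fun x hx => by dsimp only; linarith [hs x hx]⟩)
    refine ⟨SP.CP n p' T', SP.cp_mem_Kcal hvalid', ?_⟩
    intro x hx
    have hxI : x ∈ Icube n := SP.sub_Icube l hl α hα hx.1
    refine ⟨hxI, ?_, ?_⟩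
    · intro i s hps
      have hcase : (p i = some 1 ∧ α i = l - 1 ∧ s = 1) ∨
          (p i = some (-1) ∧ α i = 0 ∧ s = -1) := by
        revert hps
        show (if p i = some 1 ∧ α i = l - 1 then some 1
          else if p i = some (-1) ∧ α i = 0 then some (-1) else none) = some s → _
        split_ifs with h1 h2
        · intro hs'; exact Or.inl ⟨h1.1, h1.2, (Option.some_injective ℝ hs').symm⟩
        · intro hs'; exact Or.inr ⟨h2.1, h2.2, (Option.some_injective ℝ hs').symm⟩
        · intro hs'; exact absurd hs' (by simp)
      have hTi := SP.Talpha_apply l hl α x i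
      rcases hcase with ⟨hp1, hα1, rfl⟩ | ⟨hp1, hα1, rfl⟩
      · have hu : Talpha n l α x i = 1 := hx.2.1 i 1 hp1
        rw [hTi] at hu
        rw [hα1, hlcast] at hu
        have : (l:ℝ) * x i = (l:ℝ) * 1 := by linarith
        exact mul_left_cancel₀ (ne_of_gt hl0) this
      · have hu : Talpha n l α x i = -1 := hx.2.1 i (-1) hp1
        rw [hTi] at hu
        rw [hα1] at hu
        norm_num at hu
        have : (l:ℝ) * x i = (l:ℝ) * (-1) := by linarith
        exact mul_left_cancel₀ (ne_of_gt hl0) this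
    · rintro t ⟨_, _, _, _, hall⟩
      exact hall x hx
  · rintro K' hK'
    obtain ⟨p, T, hv, rfl⟩ := SP.kcal_to_cp hK'
    apply Set.Subset.antisymm
    · intro x hx
      set α : Fin n → ℕ := fun i => min (l-1) (⌊((l:ℝ) * (x i + 1))/2⌋₊) with hα
      have hαlt : ∀ i, α i < l := by
        intro i
        have h1 : α i ≤ l - 1 := min_le_left _ _
        omega
      have hxb : ∀ i, -1 ≤ x i ∧ x i ≤ 1 := SP.mem_Icube.1 hx.1
      have hbound : ∀ i, 2*((α i):ℝ) ≤ (l:ℝ)*(x i) + l ∧ (l:ℝ)*(x i) + l ≤ 2*((α i):ℝ) + 2 := by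
        intro i
        have ht0 : (0:ℝ) ≤ ((l:ℝ) * (x i + 1))/2 := by nlinarith [(hxb i).1]
        rcases le_or_gt (⌊((l:ℝ) * (x i + 1))/2⌋₊) (l-1) with hc | hc
        · have hαi : α i = ⌊((l:ℝ) * (x i + 1))/2⌋₊ := min_eq_right hc
          constructor
          · have h2 : ((⌊((l:ℝ) * (x i + 1))/2⌋₊ : ℕ):ℝ) ≤ ((l:ℝ) * (x i + 1))/2 :=
              Nat.floor_le ht0
            rw [hαi]
            linarith
          · have h2 : ((l:ℝ) * (x i + 1))/2 < (⌊((l:ℝ) * (x i + 1))/2⌋₊ : ℕ) + 1 :=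
              Nat.lt_floor_add_one _
            rw [hαi]
            linarith
        · have hαi : α i = l - 1 := min_eq_left (le_of_lt hc)
          have hfl : (l:ℕ) ≤ ⌊((l:ℝ) * (x i + 1))/2⌋₊ := by omega
          have h2 : ((l:ℕ):ℝ) ≤ ((l:ℝ) * (x i + 1))/2 := by
            calc ((l:ℕ):ℝ) ≤ ((⌊((l:ℝ) * (x i + 1))/2⌋₊ : ℕ):ℝ) := by exact_mod_cast hfl
            _ ≤ ((l:ℝ) * (x i + 1))/2 := Nat.floor_le ht0
          constructor
          · rw [hαi, hlcast]
            linarith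
          · rw [hαi, hlcast]
            have := (hxb i).2
            nlinarith
      have hub : ∀ i, |Talpha n l α x i| ≤ 1 := by
        intro i
        rw [SP.Talpha_apply l hl α x i, abs_le]
        have h2 := hbound i
        constructor <;> linarith [h2.1, h2.2]
      set p'' : Fin n → Option ℝ := fun i =>
        if Talpha n l α x i = 1 then some 1
        else if Talpha n l α x i = -1 then some (-1) else none with hp''
      set T'' : Set (Fin n × Fin n × ℝ × ℝ) := {t | p'' t.1 = none ∧ p'' t.2.1 = none ∧
        (t.2.2.1 = 1 ∨ t.2.2.1 = -1) ∧ (t.2.2.2 = 1 ∨ t.2.2.2 = -1) ∧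
        t.2.2.2 * Talpha n l α x t.2.1 ≤ t.2.2.1 * Talpha n l α x t.1} with hT''
      have hp''cases : ∀ i, p'' i = none ∨ p'' i = some 1 ∨ p'' i = some (-1) := by
        intro i
        show (if Talpha n l α x i = 1 then some 1
          else if Talpha n l α x i = -1 then some (-1) else none) = none ∨
          (if Talpha n l α x i = 1 then some 1
          else if Talpha n l α x i = -1 then some (-1) else none) = some 1 ∨
          (if Talpha n l α x i = 1 then some 1
          else if Talpha n l α x i = -1 then some (-1) else none) = some (-1)
        split_ifs <;> simp
      have hp''pin : ∀ i s, p'' i = some s → Talpha n l α x i = s := by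
        intro i s h
        revert h
        show (if Talpha n l α x i = 1 then some 1
          else if Talpha n l α x i = -1 then some (-1) else none) = some s → _
        split_ifs with h1 h2
        · intro hs'; rw [h1]; exact Option.some_injective ℝ hs'
        · intro hs'; rw [h2]; exact Option.some_injective ℝ hs'
        · intro hs'; exact absurd hs' (by simp)
      have hp''mk : ∀ i s, Talpha n l α x i = s → (s = 1 ∨ s = -1) → p'' i = some s := by
        intro i s h hs
        show (if Talpha n l α x i = 1 then some 1
          else if Talpha n l α x i = -1 then some (-1) else none) = some s
        rcases hs with rfl | rfl
        · rw [if_pos h]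
        · rw [if_neg (by rw [h]; norm_num), if_pos h]
      have hp''freemk : ∀ i, |Talpha n l α x i| < 1 → p'' i = none := by
        intro i hi
        show (if Talpha n l α x i = 1 then some 1
          else if Talpha n l α x i = -1 then some (-1) else none) = none
        rw [if_neg, if_neg]
        · intro h; rw [h] at hi; norm_num at hi
        · intro h; rw [h] at hi; norm_num at hi
      have hvalid'' : SP.ValidCP n p'' T'' := by
        refine ⟨hp''cases, ?_, ?_⟩
        · rintro t ⟨h1, h2, h3, h4, _⟩
          exact ⟨h1, h2, h3, h4⟩
        · intro i j hi hj
          constructor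
          · rcases le_total 0 (Talpha n l α x i + Talpha n l α x j) with h | h
            · exact Or.inl ⟨hi, hj, Or.inl rfl, Or.inr rfl, by dsimp only; linarith⟩
            · exact Or.inr (Or.inl ⟨hi, hj, Or.inr rfl, Or.inl rfl, by dsimp only; linarith⟩)
          · rcases le_total (Talpha n l α x j) (Talpha n l α x i) with h | h
            · exact Or.inl ⟨hi, hj, Or.inl rfl, Or.inl rfl, by dsimp only; linarith⟩
            · exact Or.inr (Or.inl ⟨hi, hj, Or.inr rfl, Or.inr rfl, by dsimp only; linarith⟩)
      have hxmem : x ∈ Talpha n l α ⁻¹' SP.CP n p'' T'' := by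
        refine ⟨?_, ?_, ?_⟩
        · rw [SP.mem_Icube]
          intro i
          exact abs_le.1 (hub i)
        · intro i s h
          exact hp''pin i s h
        · rintro t ⟨_, _, _, _, h5⟩
          exact h5
      have hsub : Talpha n l α ⁻¹' SP.CP n p'' T'' ⊆ SP.CP n p T := by
        intro y hy
        have hyI : y ∈ Icube n := SP.sub_Icube l hl α hαlt hy.1
        have hwb : ∀ i, |Talpha n l α y i| ≤ 1 := by
          intro i
          exact abs_le.2 (SP.mem_Icube.1 hy.1 i)
        have hwpin : ∀ i, |Talpha n l α x i| = 1 → Talpha n l α y i = Talpha n l α x i := by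
          intro i hi
          rcases SP.pm_abs hi with h | h
          · rw [h]; exact hy.2.1 i 1 (hp''mk i 1 h (Or.inl rfl))
          · rw [h]; exact hy.2.1 i (-1) (hp''mk i (-1) h (Or.inr rfl))
        refine ⟨hyI, ?_, ?_⟩
        · -- pinned coordinates of the big piece
          intro i s hps
          rcases hv.1 i with h | h | h
          · rw [h] at hps; exact absurd hps (by simp)
          · rw [h] at hps
            have hs1 : s = 1 := (Option.some_injective ℝ hps).symm
            have hx1 : x i = 1 := hx.2.1 i 1 h
            have hfl : ⌊((l:ℝ) * (x i + 1))/2⌋₊ = l := by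
              rw [hx1]
              have h2 : ((l:ℝ) * (1 + 1))/2 = ((l:ℕ):ℝ) := by push_cast; ring
              rw [h2, Nat.floor_natCast]
            have hαi : α i = l - 1 := by
              show min (l-1) (⌊((l:ℝ) * (x i + 1))/2⌋₊) = l - 1
              rw [hfl]
              exact min_eq_left (by omega)
            have hui : Talpha n l α x i = 1 := by
              rw [SP.Talpha_apply l hl α x i, hx1, hαi, hlcast]
              ring
            have hwi : Talpha n l α y i = 1 := by
              rw [hwpin i (by rw [hui]; norm_num), hui]
            rw [SP.Talpha_apply l hl α y i, hαi, hlcast] at hwi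
            have h3 : (l:ℝ) * y i = (l:ℝ) * 1 := by linarith
            rw [hs1]
            exact mul_left_cancel₀ (ne_of_gt hl0) h3
          · rw [h] at hps
            have hs1 : s = -1 := (Option.some_injective ℝ hps).symm
            have hx1 : x i = -1 := hx.2.1 i (-1) h
            have hfl : ⌊((l:ℝ) * (x i + 1))/2⌋₊ = 0 := by
              rw [hx1]
              norm_num
            have hαi : α i = 0 := by
              show min (l-1) (⌊((l:ℝ) * (x i + 1))/2⌋₊) = 0
              rw [hfl]
              exact min_eq_right (Nat.zero_le _)
            have hui : Talpha n l α x i = -1 := by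
              rw [SP.Talpha_apply l hl α x i, hx1, hαi]
              push_cast
              ring
            have hwi : Talpha n l α y i = -1 := by
              rw [hwpin i (by rw [hui]; norm_num), hui]
            rw [SP.Talpha_apply l hl α y i, hαi] at hwi
            push_cast at hwi
            have h3 : (l:ℝ) * y i = (l:ℝ) * (-1) := by linarith
            rw [hs1]
            exact mul_left_cancel₀ (ne_of_gt hl0) h3
        · -- the inequalities, via the transfer lemma
          rintro ⟨i, j, a, b⟩ ht
          have hab := hv.2.1 _ ht
          have hxcon : b * x j ≤ a * x i := hx.2.2 _ ht
          have hexi : (l:ℝ) * x i = Talpha n l α x i + (2*((α i):ℝ)+1-(l:ℝ)) := by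
            rw [SP.Talpha_apply l hl α x i]; ring
          have hexj : (l:ℝ) * x j = Talpha n l α x j + (2*((α j):ℝ)+1-(l:ℝ)) := by
            rw [SP.Talpha_apply l hl α x j]; ring
          have heyi : (l:ℝ) * y i = Talpha n l α y i + (2*((α i):ℝ)+1-(l:ℝ)) := by
            rw [SP.Talpha_apply l hl α y i]; ring
          have heyj : (l:ℝ) * y j = Talpha n l α y j + (2*((α j):ℝ)+1-(l:ℝ)) := by
            rw [SP.Talpha_apply l hl α y j]; ring
          have hfree : |Talpha n l α x i| < 1 → |Talpha n l α x j| < 1 →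
              b * Talpha n l α x j ≤ a * Talpha n l α x i →
              b * Talpha n l α y j ≤ a * Talpha n l α y i := by
            intro h1 h2 h3
            have htT : ((i, j, a, b) : Fin n × Fin n × ℝ × ℝ) ∈ T'' :=
              ⟨hp''freemk i h1, hp''freemk j h2, hab.2.2.1, hab.2.2.2, h3⟩
            exact hy.2.2 _ htT
          exact SP.transfer2 l hl a b hab.2.2.1 hab.2.2.2 (α i) (α j)
            (Talpha n l α x i) (Talpha n l α x j) (Talpha n l α y i) (Talpha n l α y j)
            (x i) (x j) (y i) (y j) (hub i) (hub j) (hwb i) (hwb j)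
            (hwpin i) (hwpin j) hfree hexi hexj heyi heyj hxcon
      exact Set.mem_sUnion.2 ⟨_, ⟨⟨α, hαlt, SP.CP n p'' T'', SP.cp_mem_Kcal hvalid'', rfl⟩,
        hsub⟩, hxmem⟩
    · rintro x ⟨Kp, ⟨_, hKp2⟩, hxKp⟩
      exact hKp2 hxKp
end
end

section
/- Let l ≥ 1 be an integer and α ∈ {0,…,l−1}^n, and let T_α(x) := l(x − x_α) with x_α := ((2α_1+1−l)/l, …, (2α_n+1−l)/l). Then for all i, j ∈ {1,…,n} and a, b ∈ {−1,1}, either T_α⁻¹(H^n_{ij}(a,b)) ⊆ H^n_{ij}(a,b) or T_α⁻¹(H^n_{ij}(a,b)) ⊆ H^n_{ij}(−a,−b). Consequently, for every H ∈ K°_n there exists H' ∈ K°_n with T_α⁻¹(H) ⊆ H'. -/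
open Set Function

noncomputable section

private lemma stmt13_aux_le {l p q di dj : ℝ} (hl : 0 < l) {k : ℤ} (hk : di - dj = 2*k)
    (hk0 : 0 ≤ k) (hmain : l*q - dj ≤ l*p - di) : q ≤ p := by
  have h0 : (0:ℝ) ≤ (k:ℝ) := by exact_mod_cast hk0
  have h : l*q ≤ l*p := by nlinarith
  exact le_of_mul_le_mul_left h hl

private lemma stmt13_aux_ge {l p q di dj : ℝ} (hl : 0 < l) {k : ℤ} (hk : di - dj = 2*k)
    (hk0 : k < 0) (hp2 : l*p - di ≤ 1) (hq1 : -1 ≤ l*q - dj) : p ≤ q := by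
  have hk1 : k ≤ -1 := by omega
  have h0 : (k:ℝ) ≤ -1 := by exact_mod_cast hk1
  have h : l*p ≤ l*q := by nlinarith
  exact le_of_mul_le_mul_left h hl

/-- For `T_α(x) = l(x - x_α)`: each `T_α⁻¹(H^n_{ij}(a,b))` is contained in
`H^n_{ij}(a,b)` or in `H^n_{ij}(-a,-b)`; consequently, for every `H ∈ K°_n` there is
`H' ∈ K°_n` with `T_α⁻¹(H) ⊆ H'`. -/
theorem stmt13 (n : ℕ) (hn : 1 ≤ n) (l : ℕ) (hl : 1 ≤ l) (α : Fin n → ℕ)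
    (hα : ∀ i, α i < l) :
    (∀ (i j : Fin n) (a b : ℝ), (a = 1 ∨ a = -1) → (b = 1 ∨ b = -1) →
      Talpha n l α ⁻¹' Hset n i j a b ⊆ Hset n i j a b ∨
      Talpha n l α ⁻¹' Hset n i j a b ⊆ Hset n i j (-a) (-b)) ∧
    ∀ H ∈ Ko n, ∃ H' ∈ Ko n, Talpha n l α ⁻¹' H ⊆ H' := by
  classical
  have hl0 : (0:ℝ) < l := by exact_mod_cast hl
  have hlne : (l:ℝ) ≠ 0 := ne_of_gt hl0
  have hTc : ∀ (x : E n) (k : Fin n),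
      Talpha n l α x k = (l:ℝ) * (x k) - (2*(α k:ℝ)+1-(l:ℝ)) := by
    intro x k
    simp only [Talpha, xalpha, PiLp.smul_apply, PiLp.sub_apply, smul_eq_mul, PiLp.toLp_apply]
    field_simp
  have hmem : ∀ (x : E n) (i j : Fin n) (a b : ℝ),
      x ∈ Hset n i j a b ↔ (∀ k : Fin n, x k ∈ Icc (-1:ℝ) 1) ∧ b * x j ≤ a * x i := by
    intro x i j a b
    constructor
    · rintro ⟨⟨h1, -⟩, h2⟩
      exact ⟨fun k => h1 k k.isLt, h2⟩
    · rintro ⟨h1, h2⟩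
      exact ⟨⟨fun k _ => h1 k, fun k hk => absurd k.isLt (not_lt.mpr hk)⟩, h2⟩
  -- x in preimage implies x in cube
  have hxcube : ∀ x : E n, (∀ k : Fin n, Talpha n l α x k ∈ Icc (-1:ℝ) 1) →
      ∀ k : Fin n, x k ∈ Icc (-1:ℝ) 1 := by
    intro x hx k
    have h := hx k
    rw [hTc] at h
    obtain ⟨h1, h2⟩ := h
    have hαk : (α k : ℝ) + 1 ≤ (l:ℝ) := by exact_mod_cast hα k
    have hαk0 : (0:ℝ) ≤ (α k : ℝ) := Nat.cast_nonneg _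
    constructor
    · nlinarith
    · nlinarith
  have key : ∀ (i j : Fin n) (a b : ℝ), (a = 1 ∨ a = -1) → (b = 1 ∨ b = -1) →
      Talpha n l α ⁻¹' Hset n i j a b ⊆ Hset n i j a b ∨
      Talpha n l α ⁻¹' Hset n i j a b ⊆ Hset n i j (-a) (-b) := by
    intro i j a b ha hb
    obtain ⟨k, hk⟩ : ∃ k : ℤ, a*(2*(α i:ℝ)+1-(l:ℝ)) - b*(2*(α j:ℝ)+1-(l:ℝ)) = 2*k := by
      rcases ha with rfl | rfl <;> rcases hb with rfl | rfl
      · exact ⟨(α i : ℤ) - (α j : ℤ), by push_cast; ring⟩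
      · exact ⟨(α i : ℤ) + (α j : ℤ) + 1 - (l : ℤ), by push_cast; ring⟩
      · exact ⟨-(α i : ℤ) - (α j : ℤ) - 1 + (l : ℤ), by push_cast; ring⟩
      · exact ⟨(α j : ℤ) - (α i : ℤ), by push_cast; ring⟩
    have habs : |a| = 1 ∧ |b| = 1 := by
      constructor <;> [rcases ha with rfl | rfl; rcases hb with rfl | rfl] <;> norm_num
    rcases le_or_gt 0 k with hk0 | hk0
    · left
      intro x hx
      have hx' := (hmem _ i j a b).mp hx
      rw [hmem]
      refine ⟨hxcube x hx'.1, ?_⟩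
      have h2 := hx'.2
      rw [hTc, hTc] at h2
      have hmain : (l:ℝ)*(b * x j) - b*(2*(α j:ℝ)+1-(l:ℝ)) ≤
          (l:ℝ)*(a * x i) - a*(2*(α i:ℝ)+1-(l:ℝ)) := by nlinarith [h2]
      exact stmt13_aux_le hl0 hk hk0 hmain
    · right
      intro x hx
      have hx' := (hmem _ i j a b).mp hx
      rw [hmem]
      refine ⟨hxcube x hx'.1, ?_⟩
      have hi := hx'.1 i
      have hj := hx'.1 j
      rw [hTc] at hi hj
      have hpi : |a * ((l:ℝ) * x i - (2*(α i:ℝ)+1-(l:ℝ)))| ≤ 1 := by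
        rw [abs_mul, habs.1, one_mul]
        exact abs_le.mpr ⟨hi.1, hi.2⟩
      have hqj : |b * ((l:ℝ) * x j - (2*(α j:ℝ)+1-(l:ℝ)))| ≤ 1 := by
        rw [abs_mul, habs.2, one_mul]
        exact abs_le.mpr ⟨hj.1, hj.2⟩
      rw [abs_le] at hpi hqj
      have hp2 : (l:ℝ)*(a * x i) - a*(2*(α i:ℝ)+1-(l:ℝ)) ≤ 1 := by nlinarith [hpi.2]
      have hq1 : -1 ≤ (l:ℝ)*(b * x j) - b*(2*(α j:ℝ)+1-(l:ℝ)) := by nlinarith [hqj.1]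
      have := stmt13_aux_ge hl0 hk hk0 hp2 hq1
      linarith [this]
  refine ⟨key, ?_⟩
  rintro H ⟨S, ⟨hSsub, hSfund⟩, rfl⟩
  set S' : Set (Set (E n)) :=
    {B | ∃ (i j : Fin n) (a b : ℝ), (a = 1 ∨ a = -1) ∧ (b = 1 ∨ b = -1) ∧
      Hset n i j a b ∈ S ∧ Talpha n l α ⁻¹' Hset n i j a b ⊆ B ∧
      (B = Hset n i j a b ∨ B = Hset n i j (-a) (-b))} with hS'
  refine ⟨⋂₀ S', ⟨S', ⟨?_, ?_⟩, rfl⟩, ?_⟩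
  · -- S' ⊆ HfamD n n
    rintro B ⟨i, j, a, b, ha, hb, -, -, hB | hB⟩
    · exact ⟨i, j, i.isLt, j.isLt, a, b, ha, hb, hB⟩
    · refine ⟨i, j, i.isLt, j.isLt, -a, -b, ?_, ?_, hB⟩
      · rcases ha with rfl | rfl <;> norm_num
      · rcases hb with rfl | rfl <;> norm_num
  · -- fundamentality
    intro i j hi hj hij
    have hfund := hSfund i j hi hj hij
    constructor
    · rcases hfund.1 with h1 | h1
      · rcases key i j 1 (-1) (Or.inl rfl) (Or.inr rfl) with hsub | hsub
        · exact Or.inl ⟨i, j, 1, -1, Or.inl rfl, Or.inr rfl, h1, hsub, Or.inl rfl⟩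
        · simp only [neg_neg] at hsub
          exact Or.inr ⟨i, j, 1, -1, Or.inl rfl, Or.inr rfl, h1, hsub, Or.inr (by norm_num [Hset])⟩
      · rcases key i j (-1) 1 (Or.inr rfl) (Or.inl rfl) with hsub | hsub
        · exact Or.inr ⟨i, j, -1, 1, Or.inr rfl, Or.inl rfl, h1, hsub, Or.inl rfl⟩
        · simp only [neg_neg] at hsub
          exact Or.inl ⟨i, j, -1, 1, Or.inr rfl, Or.inl rfl, h1, hsub, Or.inr (by norm_num [Hset])⟩
    · rcases hfund.2 with h2 | h2
      · rcases key i j 1 1 (Or.inl rfl) (Or.inl rfl) with hsub | hsub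
        · exact Or.inl ⟨i, j, 1, 1, Or.inl rfl, Or.inl rfl, h2, hsub, Or.inl rfl⟩
        · exact Or.inr ⟨i, j, 1, 1, Or.inl rfl, Or.inl rfl, h2, hsub, Or.inr rfl⟩
      · rcases key i j (-1) (-1) (Or.inr rfl) (Or.inr rfl) with hsub | hsub
        · exact Or.inr ⟨i, j, -1, -1, Or.inr rfl, Or.inr rfl, h2, hsub, Or.inl rfl⟩
        · simp only [neg_neg] at hsub
          exact Or.inl ⟨i, j, -1, -1, Or.inr rfl, Or.inr rfl, h2, hsub, Or.inr (by norm_num [Hset])⟩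
  · -- inclusion
    intro x hx
    rw [Set.mem_sInter]
    rintro B ⟨i, j, a, b, -, -, hAS, hsub, -⟩
    exact hsub (Set.mem_preimage.mpr (Set.mem_sInter.mp hx _ hAS))
end
end
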